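/- arXiv:2008.02173 — 9 statements merged into one kernel-verified Lean document; each statement's English description precedes it below -/
import Mathlib

section
/- If a finite simple graph G is a B₀-VPG graph, then no two distinct vertices of an induced C₄ in G are diamond related, and G is C̄₆-free. -/
/-- A closed axis-parallel line segment in the plane, designated horizontal or
vertical; degenerate one-point segments are allowed. -/
structure Seg where
  horiz : Bool
  coord : ℝ
  lo : ℝ
  hi : ℝ
  lo_le_hi : lo ≤ hi

/-- The set of points of an axis-parallel segment. -/
def Seg.set (s : Seg) : Set (ℝ × ℝ) :=
  if s.horiz then {p : ℝ × ℝ | p.2 = s.coord ∧ p.1 ∈ Set.Icc s.lo s.hi}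
  else {p : ℝ × ℝ | p.1 = s.coord ∧ p.2 ∈ Set.Icc s.lo s.hi}

/-- `I` is a B₀-VPG representation of `G`: two distinct vertices are adjacent
iff their segments intersect. -/
def IsB0Rep {V : Type*} (G : SimpleGraph V) (I : V → Seg) : Prop :=
  ∀ u v : V, u ≠ v → (G.Adj u v ↔ ((I u).set ∩ (I v).set).Nonempty)

/-- `G` is a B₀-VPG graph. -/
def IsB0VPG {V : Type*} (G : SimpleGraph V) : Prop :=
  ∃ I : V → Seg, IsB0Rep G I

/-- `G` is a cocomparability graph. -/
def IsCocomparability {V : Type*} (G : SimpleGraph V) : Prop :=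
  ∃ P : PartialOrder V, ∀ u v : V, u ≠ v →
    (G.Adj u v ↔ ¬ (P.le u v ∨ P.le v u))

/-- `G` is a comparability graph. -/
def IsComparability {V : Type*} (G : SimpleGraph V) : Prop :=
  ∃ P : PartialOrder V, ∀ u v : V, u ≠ v →
    (G.Adj u v ↔ (P.le u v ∨ P.le v u))

/-- `a, b, c, d` form an induced 4-cycle in `G`. -/
def IsInducedC4 {V : Type*} (G : SimpleGraph V) (a b c d : V) : Prop :=
  a ≠ b ∧ a ≠ c ∧ a ≠ d ∧ b ≠ c ∧ b ≠ d ∧ c ≠ d ∧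
  G.Adj a b ∧ G.Adj b c ∧ G.Adj c d ∧ G.Adj d a ∧ ¬ G.Adj a c ∧ ¬ G.Adj b d

/-- `xy` is a diamond diagonal of `G`. -/
def IsDiamondDiagonal {V : Type*} (G : SimpleGraph V) (x y : V) : Prop :=
  G.Adj x y ∧ ∃ u w : V, u ≠ w ∧ u ≠ x ∧ u ≠ y ∧ w ≠ x ∧ w ≠ y ∧
    ¬ G.Adj u w ∧ G.Adj u x ∧ G.Adj u y ∧ G.Adj w x ∧ G.Adj w y

/-- `x` and `y` are diamond related in `G`: they are joined by a sequence of
diamond diagonals. -/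
def DiamondRelated {V : Type*} (G : SimpleGraph V) : V → V → Prop :=
  Relation.ReflTransGen (IsDiamondDiagonal G)

/-- No two distinct vertices of an induced `C₄` of `G` are diamond related. -/
def NoC4DiamondRelated {V : Type*} (G : SimpleGraph V) : Prop :=
  ∀ a b c d : V, IsInducedC4 G a b c d →
    ∀ x ∈ ({a, b, c, d} : Set V), ∀ y ∈ ({a, b, c, d} : Set V),
      x ≠ y → ¬ DiamondRelated G x y

/-- The complement of the 6-cycle. -/
def C6bar : SimpleGraph (Fin 6) where
  Adj i j := i ≠ j ∧ j - i ≠ 1 ∧ i - j ≠ 1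
  symm := by
    constructor
    intro i j h
    exact ⟨h.1.symm, h.2.2, h.2.1⟩
  loopless := by
    constructor
    intro i h
    exact h.1 rfl

/-- `G` contains no induced copy of the complement of `C₆`. -/
def C6barFree {V : Type*} (G : SimpleGraph V) : Prop :=
  ¬ ∃ f : Fin 6 → V, Function.Injective f ∧
      ∀ i j : Fin 6, C6bar.Adj i j ↔ G.Adj (f i) (f j)

/-- `σ` is an umbrella-free (cocomparability) ordering of `G`. -/
def UmbrellaFree {V : Type*} (G : SimpleGraph V) (σ : LinearOrder V) : Prop :=
  ∀ x y z : V, σ.lt x y → σ.lt y z → G.Adj x z → (G.Adj x y ∨ G.Adj y z)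
namespace B0aux

def sw (s : Seg) : Seg := ⟨!s.horiz, s.coord, s.lo, s.hi, s.lo_le_hi⟩

lemma memH {s : Seg} (h : s.horiz = true) {p : ℝ × ℝ} :
    p ∈ s.set ↔ p.2 = s.coord ∧ s.lo ≤ p.1 ∧ p.1 ≤ s.hi := by
  simp [Seg.set, h, Set.mem_Icc]

lemma memV {s : Seg} (h : s.horiz = false) {p : ℝ × ℝ} :
    p ∈ s.set ↔ p.1 = s.coord ∧ s.lo ≤ p.2 ∧ p.2 ≤ s.hi := by
  simp [Seg.set, h, Set.mem_Icc]

lemma axis {s : Seg} {p q : ℝ × ℝ} (hp : p ∈ s.set) (hq : q ∈ s.set) :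
    p.1 = q.1 ∨ p.2 = q.2 := by
  cases h : s.horiz
  · rw [memV h] at hp hq; exact Or.inl (hp.1.trans hq.1.symm)
  · rw [memH h] at hp hq; exact Or.inr (hp.1.trans hq.1.symm)

lemma parCoord {s t : Seg} (h : s.horiz = t.horiz) {p : ℝ × ℝ}
    (hp : p ∈ s.set) (hq : p ∈ t.set) : s.coord = t.coord := by
  cases hs : s.horiz
  · rw [memV hs] at hp; rw [memV (h ▸ hs)] at hq; exact hp.1.symm.trans hq.1
  · rw [memH hs] at hp; rw [memH (h ▸ hs)] at hq; exact hp.1.symm.trans hq.1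

lemma sw_set {s : Seg} {p : ℝ × ℝ} : p ∈ (sw s).set ↔ (p.2, p.1) ∈ s.set := by
  cases h : s.horiz
  · rw [memV h, memH (show (sw s).horiz = true by simp [sw, h])]; exact Iff.rfl
  · rw [memH h, memV (show (sw s).horiz = false by simp [sw, h])]; exact Iff.rfl

lemma sw_inter {s t : Seg} :
    ((sw s).set ∩ (sw t).set).Nonempty ↔ (s.set ∩ t.set).Nonempty :=
  ⟨fun ⟨p, h1, h2⟩ => ⟨(p.2, p.1), sw_set.mp h1, sw_set.mp h2⟩,
   fun ⟨p, h1, h2⟩ => ⟨(p.2, p.1), sw_set.mpr h1, sw_set.mpr h2⟩⟩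

lemma sw_rep {V : Type*} {G : SimpleGraph V} {I : V → Seg} (hI : IsB0Rep G I) :
    IsB0Rep G (fun v => sw (I v)) :=
  fun u v h => (hI u v h).trans sw_inter.symm

lemma inter_comm' {s t : Seg} (h : (s.set ∩ t.set).Nonempty) :
    (t.set ∩ s.set).Nonempty := by
  obtain ⟨p, h1, h2⟩ := h; exact ⟨p, h2, h1⟩

lemma seg_conv {s : Seg} {p q : ℝ × ℝ} {k x : ℝ} (hp : p ∈ s.set) (hq : q ∈ s.set)
    (hpk : p.2 = k) (hqk : q.2 = k) (h1 : min p.1 q.1 ≤ x) (h2 : x ≤ max p.1 q.1) :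
    ((x, k) : ℝ × ℝ) ∈ s.set := by
  cases h : s.horiz
  · rw [memV h] at hp hq ⊢
    have e : p.1 = q.1 := hp.1.trans hq.1.symm
    have hx : x = p.1 := by
      rw [e, min_self] at h1; rw [e, max_self] at h2; linarith
    exact ⟨hx.trans hp.1, hpk ▸ hp.2.1, hpk ▸ hp.2.2⟩
  · rw [memH h] at hp hq ⊢
    exact ⟨hpk ▸ hp.1, le_trans (le_min hp.2.1 hq.2.1) h1,
      le_trans h2 (max_le hp.2.2 hq.2.2)⟩

lemma cross_mem {s t u : Seg} (hs : s.horiz = true) (ht : t.horiz = false)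
    (hus : (u.set ∩ s.set).Nonempty) (hut : (u.set ∩ t.set).Nonempty) :
    ((t.coord, s.coord) : ℝ × ℝ) ∈ u.set := by
  obtain ⟨p, hpu, hps⟩ := hus
  obtain ⟨q, hqu, hqt⟩ := hut
  rw [memH hs] at hps
  rw [memV ht] at hqt
  cases hu : u.horiz
  · rw [memV hu] at hpu hqu ⊢
    exact ⟨hqt.1 ▸ hqu.1, hps.1 ▸ hpu.2.1, hps.1 ▸ hpu.2.2⟩
  · rw [memH hu] at hpu hqu ⊢
    exact ⟨hps.1 ▸ hpu.1, hqt.1 ▸ hqu.2.1, hqt.1 ▸ hqu.2.2⟩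



lemma tri_HHV {a b c : Seg} (ha : a.horiz = true) (hb : b.horiz = true)
    (hc : c.horiz = false)
    (hab : (a.set ∩ b.set).Nonempty) (hbc : (b.set ∩ c.set).Nonempty)
    (hac : (a.set ∩ c.set).Nonempty) :
    ∃ p : ℝ × ℝ, p ∈ a.set ∧ p ∈ b.set ∧ p ∈ c.set := by
  obtain ⟨p, hpa, hpb⟩ := hab
  obtain ⟨q, hqb, hqc⟩ := hbc
  obtain ⟨r, hra, hrc⟩ := hac
  rw [memH ha] at hpa hra
  rw [memH hb] at hpb hqb
  rw [memV hc] at hqc hrc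
  refine ⟨(c.coord, a.coord), ?_, ?_, ?_⟩
  · rw [memH ha]
    exact ⟨rfl, hrc.1 ▸ hra.2.1, hrc.1 ▸ hra.2.2⟩
  · rw [memH hb]
    exact ⟨hpa.1 ▸ hpb.1, hqc.1 ▸ hqb.2.1, hqc.1 ▸ hqb.2.2⟩
  · rw [memV hc]
    exact ⟨rfl, hra.1 ▸ hrc.2.1, hra.1 ▸ hrc.2.2⟩

lemma tri_HHH {a b c : Seg} (ha : a.horiz = true) (hb : b.horiz = true)
    (hc : c.horiz = true)
    (hab : (a.set ∩ b.set).Nonempty) (hbc : (b.set ∩ c.set).Nonempty)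
    (hac : (a.set ∩ c.set).Nonempty) :
    ∃ p : ℝ × ℝ, p ∈ a.set ∧ p ∈ b.set ∧ p ∈ c.set := by
  obtain ⟨p, hpa, hpb⟩ := hab
  obtain ⟨q, hqb, hqc⟩ := hbc
  obtain ⟨r, hra, hrc⟩ := hac
  rw [memH ha] at hpa hra
  rw [memH hb] at hpb hqb
  rw [memH hc] at hqc hrc
  refine ⟨(max (max a.lo b.lo) c.lo, a.coord), ?_, ?_, ?_⟩
  · rw [memH ha]
    refine ⟨rfl, ?_, ?_⟩
    · simp
    · refine max_le (max_le a.lo_le_hi ?_) ?_ <;>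
      [ (have := hpa.2.2; have := hpb.2.1; linarith);
        (have := hra.2.2; have := hrc.2.1; linarith)]
  · rw [memH hb]
    refine ⟨hpa.1 ▸ hpb.1, ?_, ?_⟩
    · simp
    · refine max_le (max_le ?_ b.lo_le_hi) ?_
      · have := hpa.2.1; have := hpb.2.2; linarith
      · have := hqb.2.2; have := hqc.2.1; linarith
  · rw [memH hc]
    refine ⟨hra.1 ▸ hrc.1, ?_, ?_⟩
    · simp
    · refine max_le (max_le ?_ ?_) c.lo_le_hi
      · have := hra.2.1; have := hrc.2.2; linarith
      · have := hqb.2.1; have := hqc.2.2; linarith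

lemma triangle {a b c : Seg}
    (hab : (a.set ∩ b.set).Nonempty) (hbc : (b.set ∩ c.set).Nonempty)
    (hac : (a.set ∩ c.set).Nonempty) :
    ∃ p : ℝ × ℝ, p ∈ a.set ∧ p ∈ b.set ∧ p ∈ c.set := by
  have swf : ∀ s : Seg, s.horiz = false → (sw s).horiz = true := by
    intro s h; simp [sw, h]
  have swt : ∀ s : Seg, s.horiz = true → (sw s).horiz = false := by
    intro s h; simp [sw, h]
  cases ha : a.horiz <;> cases hb : b.horiz <;> cases hc : c.horiz
  · -- FFF
    obtain ⟨p, h1, h2, h3⟩ := tri_HHH (swf a ha) (swf b hb) (swf c hc)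
      (sw_inter.mpr hab) (sw_inter.mpr hbc) (sw_inter.mpr hac)
    exact ⟨(p.2, p.1), sw_set.mp h1, sw_set.mp h2, sw_set.mp h3⟩
  · -- FFT
    obtain ⟨p, h1, h2, h3⟩ := tri_HHV (swf a ha) (swf b hb) (swt c hc)
      (sw_inter.mpr hab) (sw_inter.mpr hbc) (sw_inter.mpr hac)
    exact ⟨(p.2, p.1), sw_set.mp h1, sw_set.mp h2, sw_set.mp h3⟩
  · -- FTF : b is the odd one out; use (sw a, sw c, sw b)
    obtain ⟨p, h1, h3, h2⟩ := tri_HHV (swf a ha) (swf c hc) (swt b hb)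
      (sw_inter.mpr hac) (sw_inter.mpr (inter_comm' hbc)) (sw_inter.mpr hab)
    exact ⟨(p.2, p.1), sw_set.mp h1, sw_set.mp h2, sw_set.mp h3⟩
  · -- FTT : a odd (false); use (b, c, a) directly
    obtain ⟨p, h2, h3, h1⟩ := tri_HHV hb hc ha
      hbc (inter_comm' hac) (inter_comm' hab)
    exact ⟨p, h1, h2, h3⟩
  · -- TFF : a odd (true); use (sw b, sw c, sw a)
    obtain ⟨p, h2, h3, h1⟩ := tri_HHV (swf b hb) (swf c hc) (swt a ha)
      (sw_inter.mpr hbc) (sw_inter.mpr (inter_comm' hac)) (sw_inter.mpr (inter_comm' hab))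
    exact ⟨(p.2, p.1), sw_set.mp h1, sw_set.mp h2, sw_set.mp h3⟩
  · -- TFT : b odd: (a, c, b)
    obtain ⟨p, h1, h3, h2⟩ := tri_HHV ha hc hb
      hac (inter_comm' hbc) hab
    exact ⟨p, h1, h2, h3⟩
  · -- TTF
    exact tri_HHV ha hb hc hab hbc hac
  · -- TTT
    exact tri_HHH ha hb hc hab hbc hac
lemma line_case {A B C D E : Seg} {P Q R0 R1 : ℝ × ℝ} {k : ℝ}
    (hPk : P.2 = k) (hQk : Q.2 = k) (hR0k : R0.2 = k) (hR1k : R1.2 = k)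
    (hPA : P ∈ A.set) (hPC : P ∈ C.set) (hPE : P ∈ E.set)
    (hQB : Q ∈ B.set) (hQD : Q ∈ D.set)
    (hR0A : R0 ∈ A.set) (hR0D : R0 ∈ D.set)
    (hR1B : R1 ∈ B.set) (hR1E : R1 ∈ E.set)
    (hpq : P.1 < Q.1)
    (nAB : ¬(A.set ∩ B.set).Nonempty) (nCD : ¬(C.set ∩ D.set).Nonempty)
    (nDE : ¬(D.set ∩ E.set).Nonempty) : False := by
  have ePk : ((P.1, k) : ℝ × ℝ) = P := Prod.ext rfl hPk.symm
  have eQk : ((Q.1, k) : ℝ × ℝ) = Q := Prod.ext rfl hQk.symm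
  have eR1k : ((R1.1, k) : ℝ × ℝ) = R1 := Prod.ext rfl hR1k.symm
  -- P.1 < R0.1
  have h1 : P.1 < R0.1 := by
    by_contra hle
    push_neg at hle
    have hmem : ((P.1, k) : ℝ × ℝ) ∈ D.set :=
      seg_conv hQD hR0D hQk hR0k (le_trans (min_le_right _ _) hle)
        (le_trans hpq.le (le_max_left _ _))
    exact nCD ⟨(P.1, k), ePk ▸ hPC, hmem⟩
  have h2 : R0.1 < Q.1 := by
    by_contra hle
    push_neg at hle
    have hmem : ((Q.1, k) : ℝ × ℝ) ∈ A.set :=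
      seg_conv hPA hR0A hPk hR0k (le_trans (min_le_left _ _) hpq.le)
        (le_trans hle (le_max_right _ _))
    exact nAB ⟨(Q.1, k), hmem, eQk ▸ hQB⟩
  have h3 : P.1 < R1.1 := by
    by_contra hle
    push_neg at hle
    have hmem : ((P.1, k) : ℝ × ℝ) ∈ B.set :=
      seg_conv hQB hR1B hQk hR1k (le_trans (min_le_right _ _) hle)
        (le_trans hpq.le (le_max_left _ _))
    exact nAB ⟨(P.1, k), ePk ▸ hPA, hmem⟩
  have h4 : R1.1 < Q.1 := by
    by_contra hle
    push_neg at hle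
    have hmem : ((Q.1, k) : ℝ × ℝ) ∈ E.set :=
      seg_conv hPE hR1E hPk hR1k (le_trans (min_le_left _ _) hpq.le)
        (le_trans hle (le_max_right _ _))
    exact nDE ⟨(Q.1, k), eQk ▸ hQD, hmem⟩
  rcases le_or_gt R1.1 R0.1 with hc | hc
  · have hmem : ((R1.1, k) : ℝ × ℝ) ∈ A.set :=
      seg_conv hPA hR0A hPk hR0k (le_trans (min_le_left _ _) h3.le)
        (le_trans hc (le_max_right _ _))
    exact nAB ⟨(R1.1, k), hmem, eR1k ▸ hR1B⟩
  · have hmem : ((R1.1, k) : ℝ × ℝ) ∈ D.set :=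
      seg_conv hQD hR0D hQk hR0k (le_trans (min_le_right _ _) hc.le)
        (le_trans h4.le (le_max_left _ _))
    exact nDE ⟨(R1.1, k), hmem, eR1k ▸ hR1E⟩

lemma line_case' {A B C D E : Seg} {P Q R0 R1 : ℝ × ℝ} {k : ℝ}
    (hPk : P.1 = k) (hQk : Q.1 = k) (hR0k : R0.1 = k) (hR1k : R1.1 = k)
    (hPA : P ∈ A.set) (hPC : P ∈ C.set) (hPE : P ∈ E.set)
    (hQB : Q ∈ B.set) (hQD : Q ∈ D.set)
    (hR0A : R0 ∈ A.set) (hR0D : R0 ∈ D.set)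
    (hR1B : R1 ∈ B.set) (hR1E : R1 ∈ E.set)
    (hpq : P.2 < Q.2)
    (nAB : ¬(A.set ∩ B.set).Nonempty) (nCD : ¬(C.set ∩ D.set).Nonempty)
    (nDE : ¬(D.set ∩ E.set).Nonempty) : False := by
  have m : ∀ {s : Seg} {p : ℝ × ℝ}, p ∈ s.set → ((p.2, p.1) : ℝ × ℝ) ∈ (sw s).set :=
    fun hp => sw_set.mpr hp
  exact line_case (A := sw A) (B := sw B) (C := sw C) (D := sw D) (E := sw E)
    (P := (P.2, P.1)) (Q := (Q.2, Q.1)) (R0 := (R0.2, R0.1)) (R1 := (R1.2, R1.1))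
    (k := k) hPk hQk hR0k hR1k (m hPA) (m hPC) (m hPE) (m hQB) (m hQD)
    (m hR0A) (m hR0D) (m hR1B) (m hR1E) hpq
    (fun h => nAB (sw_inter.mp h)) (fun h => nCD (sw_inter.mp h))
    (fun h => nDE (sw_inter.mp h))
lemma c6bar_geom (s0 s1 s2 s3 s4 s5 : Seg)
    (e02 : (s0.set ∩ s2.set).Nonempty) (e24 : (s2.set ∩ s4.set).Nonempty)
    (e04 : (s0.set ∩ s4.set).Nonempty)
    (e13 : (s1.set ∩ s3.set).Nonempty) (e35 : (s3.set ∩ s5.set).Nonempty)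
    (e15 : (s1.set ∩ s5.set).Nonempty)
    (e03 : (s0.set ∩ s3.set).Nonempty) (e14 : (s1.set ∩ s4.set).Nonempty)
    (e25 : (s2.set ∩ s5.set).Nonempty)
    (n01 : ¬(s0.set ∩ s1.set).Nonempty) (n12 : ¬(s1.set ∩ s2.set).Nonempty)
    (n23 : ¬(s2.set ∩ s3.set).Nonempty) (n34 : ¬(s3.set ∩ s4.set).Nonempty)
    (n45 : ¬(s4.set ∩ s5.set).Nonempty) (n50 : ¬(s5.set ∩ s0.set).Nonempty) :
    False := by
  obtain ⟨P, hP0, hP2, hP4⟩ := triangle e02 e24 e04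
  obtain ⟨Q, hQ1, hQ3, hQ5⟩ := triangle e13 e35 e15
  obtain ⟨R0, hR00, hR03⟩ := e03
  obtain ⟨R1, hR11, hR14⟩ := e14
  obtain ⟨R2, hR22, hR25⟩ := e25
  have hPQ : P ≠ Q := fun h => n01 ⟨P, hP0, h ▸ hQ1⟩
  by_cases h1 : P.1 = Q.1
  · -- vertical common line
    have h2 : P.2 ≠ Q.2 := fun h => hPQ (Prod.ext h1 h)
    have hR0x : R0.1 = P.1 := by
      rcases axis hP0 hR00 with hx | hy
      · exact hx.symm
      · rcases axis hQ3 hR03 with hx' | hy'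
        · exact hx'.symm.trans h1.symm
        · exact absurd (hy.trans hy'.symm) h2
    have hR1x : R1.1 = P.1 := by
      rcases axis hP4 hR14 with hx | hy
      · exact hx.symm
      · rcases axis hQ1 hR11 with hx' | hy'
        · exact hx'.symm.trans h1.symm
        · exact absurd (hy.trans hy'.symm) h2
    rcases lt_trichotomy P.2 Q.2 with hlt | heq | hgt
    · exact line_case' (A := s0) (B := s1) (C := s2) (D := s3) (E := s4)
        rfl h1.symm hR0x hR1x hP0 hP2 hP4 hQ1 hQ3 hR00 hR03 hR11 hR14 hlt
        n01 n23 n34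
    · exact h2 heq
    · exact line_case' (A := s3) (B := s4) (C := s5) (D := s0) (E := s1)
        h1.symm rfl hR0x hR1x hQ3 hQ5 hQ1 hP4 hP0 hR03 hR00 hR14 hR11 hgt
        n34 n50 n01
  · by_cases h2 : P.2 = Q.2
    · -- horizontal common line
      have hR0y : R0.2 = P.2 := by
        rcases axis hP0 hR00 with hx | hy
        · rcases axis hQ3 hR03 with hx' | hy'
          · exact absurd (hx.trans hx'.symm) h1
          · exact hy'.symm.trans h2.symm
        · exact hy.symm
      have hR1y : R1.2 = P.2 := by
        rcases axis hP4 hR14 with hx | hy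
        · rcases axis hQ1 hR11 with hx' | hy'
          · exact absurd (hx.trans hx'.symm) h1
          · exact hy'.symm.trans h2.symm
        · exact hy.symm
      rcases lt_trichotomy P.1 Q.1 with hlt | heq | hgt
      · exact line_case (A := s0) (B := s1) (C := s2) (D := s3) (E := s4)
          rfl h2.symm hR0y hR1y hP0 hP2 hP4 hQ1 hQ3 hR00 hR03 hR11 hR14 hlt
          n01 n23 n34
      · exact h1 heq
      · exact line_case (A := s3) (B := s4) (C := s5) (D := s0) (E := s1)
          h2.symm rfl hR0y hR1y hQ3 hQ5 hQ1 hP4 hP0 hR03 hR00 hR14 hR11 hgt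
          n34 n50 n01
    · -- generic position
      have d0 : R0 = ((Q.1, P.2) : ℝ × ℝ) ∨ R0 = ((P.1, Q.2) : ℝ × ℝ) := by
        rcases axis hP0 hR00 with hx | hy <;> rcases axis hQ3 hR03 with hx' | hy'
        · exact absurd (hx.trans hx'.symm) h1
        · exact Or.inr (Prod.ext hx.symm hy'.symm)
        · exact Or.inl (Prod.ext hx'.symm hy.symm)
        · exact absurd (hy.trans hy'.symm) h2
      have d1 : R1 = ((Q.1, P.2) : ℝ × ℝ) ∨ R1 = ((P.1, Q.2) : ℝ × ℝ) := by
        rcases axis hQ1 hR11 with hx | hy <;> rcases axis hP4 hR14 with hx' | hy'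
        · exact absurd (hx'.trans hx.symm) h1
        · exact Or.inl (Prod.ext hx.symm hy'.symm)
        · exact Or.inr (Prod.ext hx'.symm hy.symm)
        · exact absurd (hy'.trans hy.symm) h2
      have d2 : R2 = ((Q.1, P.2) : ℝ × ℝ) ∨ R2 = ((P.1, Q.2) : ℝ × ℝ) := by
        rcases axis hP2 hR22 with hx | hy <;> rcases axis hQ5 hR25 with hx' | hy'
        · exact absurd (hx.trans hx'.symm) h1
        · exact Or.inr (Prod.ext hx.symm hy'.symm)
        · exact Or.inl (Prod.ext hx'.symm hy.symm)
        · exact absurd (hy.trans hy'.symm) h2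
      rcases d0 with d0 | d0 <;> rcases d1 with d1 | d1 <;> rcases d2 with d2 | d2
      · exact n01 ⟨R0, hR00, (d0.trans d1.symm) ▸ hR11⟩
      · exact n01 ⟨R0, hR00, (d0.trans d1.symm) ▸ hR11⟩
      · exact n23 ⟨R2, hR22, (d2.trans d0.symm) ▸ hR03⟩
      · exact n12 ⟨R1, hR11, (d1.trans d2.symm) ▸ hR22⟩
      · exact n12 ⟨R1, hR11, (d1.trans d2.symm) ▸ hR22⟩
      · exact n23 ⟨R2, hR22, (d2.trans d0.symm) ▸ hR03⟩
      · exact n01 ⟨R0, hR00, (d0.trans d1.symm) ▸ hR11⟩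
      · exact n01 ⟨R0, hR00, (d0.trans d1.symm) ▸ hR11⟩
section C4
variable {V : Type*} {G : SimpleGraph V} {I : V → Seg}

lemma c4_rot {a b c d : V} (h : IsInducedC4 G a b c d) : IsInducedC4 G b c d a := by
  obtain ⟨h1, h2, h3, h4, h5, h6, e1, e2, e3, e4, m1, m2⟩ := h
  exact ⟨h4, h5, h1.symm, h6, h2.symm, h3.symm, e2, e3, e4, e1, m2,
    fun hh => m1 hh.symm⟩

lemma dd_line (hI : IsB0Rep G I) {x y : V} (h : IsDiamondDiagonal G x y) :
    (I x).horiz = (I y).horiz ∧ (I x).coord = (I y).coord := by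
  obtain ⟨hxy, u, w, huw, hux, huy, hwx, hwy, hnuw, aux1, auy1, awx1, awy1⟩ := h
  have hne := hxy.ne
  have hint := (hI x y hne).1 hxy
  by_cases hf : (I x).horiz = (I y).horiz
  · obtain ⟨p, hp1, hp2⟩ := hint
    exact ⟨hf, parCoord hf hp1 hp2⟩
  · exfalso
    have hux' : ((I u).set ∩ (I x).set).Nonempty := (hI u x hux).1 aux1
    have huy' : ((I u).set ∩ (I y).set).Nonempty := (hI u y huy).1 auy1
    have hwx' : ((I w).set ∩ (I x).set).Nonempty := (hI w x hwx).1 awx1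
    have hwy' : ((I w).set ∩ (I y).set).Nonempty := (hI w y hwy).1 awy1
    cases hx : (I x).horiz <;> cases hy : (I y).horiz
    · exact hf (hx.trans hy.symm)
    · exact hnuw ((hI u w huw).2
        ⟨_, cross_mem hy hx huy' hux', cross_mem hy hx hwy' hwx'⟩)
    · exact hnuw ((hI u w huw).2
        ⟨_, cross_mem hx hy hux' huy', cross_mem hx hy hwx' hwy'⟩)
    · exact hf (hx.trans hy.symm)

lemma dr_line (hI : IsB0Rep G I) {x y : V} (h : DiamondRelated G x y) :
    (I x).horiz = (I y).horiz ∧ (I x).coord = (I y).coord := by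
  induction h with
  | refl => exact ⟨rfl, rfl⟩
  | tail _ hd ih =>
      obtain ⟨f1, c1⟩ := ih
      obtain ⟨f2, c2⟩ := dd_line hI hd
      exact ⟨f1.trans f2, c1.trans c2⟩

lemma alt_auxH (hI : IsB0Rep G I) {a b c d : V} (h : IsInducedC4 G a b c d)
    (ha : (I a).horiz = true) (hb : (I b).horiz = true) : False := by
  obtain ⟨h1, h2, h3, h4, h5, h6, e1, e2, e3, e4, m1, m2⟩ := h
  have AB : ((I a).set ∩ (I b).set).Nonempty := (hI a b h1).1 e1
  have BC : ((I b).set ∩ (I c).set).Nonempty := (hI b c h4).1 e2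
  have CD : ((I c).set ∩ (I d).set).Nonempty := (hI c d h6).1 e3
  have DA : ((I d).set ∩ (I a).set).Nonempty := (hI d a h3.symm).1 e4
  have AC : ¬((I a).set ∩ (I c).set).Nonempty := fun hn => m1 ((hI a c h2).2 hn)
  have BD : ¬((I b).set ∩ (I d).set).Nonempty := fun hn => m2 ((hI b d h5).2 hn)
  obtain ⟨pab, pab_a, pab_b⟩ := AB
  obtain ⟨pbc, pbc_b, pbc_c⟩ := BC
  obtain ⟨pcd, pcd_c, pcd_d⟩ := CD
  obtain ⟨pda, pda_d, pda_a⟩ := DA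
  rw [memH ha] at pab_a pda_a
  rw [memH hb] at pab_b pbc_b
  have hk : (I a).coord = (I b).coord := pab_a.1.symm.trans pab_b.1
  cases hc : (I c).horiz <;> cases hd : (I d).horiz
  · -- c V, d V : point (c.coord, a.coord) ∈ a ∩ c
    rw [memV hc] at pbc_c pcd_c
    rw [memV hd] at pcd_d pda_d
    have hcd : (I c).coord = (I d).coord := pcd_c.1.symm.trans pcd_d.1
    refine AC ⟨((I c).coord, (I a).coord), ?_, ?_⟩
    · rw [memH ha]
      refine ⟨rfl, ?_, ?_⟩
      · rw [hcd, ← pda_d.1]; exact pda_a.2.1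
      · rw [hcd, ← pda_d.1]; exact pda_a.2.2
    · rw [memV hc]
      refine ⟨rfl, ?_, ?_⟩
      · rw [hk, ← pbc_b.1]; exact pbc_c.2.1
      · rw [hk, ← pbc_b.1]; exact pbc_c.2.2
  · -- c V, d H : point (c.coord, a.coord) ∈ b ∩ d
    rw [memV hc] at pbc_c pcd_c
    rw [memH hd] at pcd_d pda_d
    have hda : (I d).coord = (I a).coord := pda_d.1.symm.trans pda_a.1
    refine BD ⟨((I c).coord, (I a).coord), ?_, ?_⟩
    · rw [memH hb]
      exact ⟨hk, pbc_c.1 ▸ pbc_b.2.1, pbc_c.1 ▸ pbc_b.2.2⟩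
    · rw [memH hd]
      exact ⟨hda.symm, pcd_c.1 ▸ pcd_d.2.1, pcd_c.1 ▸ pcd_d.2.2⟩
  · -- c H, d V : point (d.coord, a.coord) ∈ a ∩ c
    rw [memH hc] at pbc_c pcd_c
    rw [memV hd] at pcd_d pda_d
    have hbc : (I b).coord = (I c).coord := pbc_b.1.symm.trans pbc_c.1
    refine AC ⟨((I d).coord, (I a).coord), ?_, ?_⟩
    · rw [memH ha]
      exact ⟨rfl, pda_d.1 ▸ pda_a.2.1, pda_d.1 ▸ pda_a.2.2⟩
    · rw [memH hc]
      exact ⟨hk.trans hbc, pcd_d.1 ▸ pcd_c.2.1, pcd_d.1 ▸ pcd_c.2.2⟩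
  · -- c H, d H : interval argument
    rw [memH hc] at pbc_c pcd_c
    rw [memH hd] at pcd_d pda_d
    have hbc : (I b).coord = (I c).coord := pbc_b.1.symm.trans pbc_c.1
    have hda : (I d).coord = (I a).coord := pda_d.1.symm.trans pda_a.1
    by_cases hov : (I a).lo ≤ (I c).hi ∧ (I c).lo ≤ (I a).hi
    · refine AC ⟨(max (I a).lo (I c).lo, (I a).coord), ?_, ?_⟩
      · rw [memH ha]
        exact ⟨rfl, le_max_left _ _, max_le (I a).lo_le_hi hov.2⟩
      · rw [memH hc]
        exact ⟨hk.trans hbc, le_max_right _ _, max_le hov.1 (I c).lo_le_hi⟩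
    · push_neg at hov
      refine BD ⟨(max (I b).lo (I d).lo, (I a).coord), ?_, ?_⟩
      · rw [memH hb]
        refine ⟨hk, le_max_left _ _, max_le (I b).lo_le_hi ?_⟩
        rcases le_or_gt (I a).lo (I c).hi with hcase | hcase
        · have := hov hcase
          have := pcd_c.2.1; have := pcd_d.2.2
          have := pda_d.2.1; have := pda_a.2.2
          linarith
        · have := pbc_b.2.2; have := pbc_c.2.1
          have := pda_a.2.1; have := pda_d.2.2
          linarith
      · rw [memH hd]
        refine ⟨hda.symm, le_max_right _ _, max_le ?_ (I d).lo_le_hi⟩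
        rcases le_or_gt (I a).lo (I c).hi with hcase | hcase
        · have := hov hcase
          have := pbc_b.2.1; have := pbc_c.2.2
          have := pab_a.2.2; have := pab_b.2.1
          linarith
        · have := pcd_c.2.2; have := pcd_d.2.1
          have := pab_a.2.1; have := pab_b.2.2
          linarith

lemma c4_alt (hI : IsB0Rep G I) {a b c d : V} (h : IsInducedC4 G a b c d) :
    (I a).horiz ≠ (I b).horiz := by
  intro he
  cases hA : (I a).horiz
  · exact alt_auxH (sw_rep hI) h (by simp [sw, hA]) (by simp [sw, ← he, hA])
  · exact alt_auxH hI h hA (he.symm.trans hA)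

lemma opp_auxH (hI : IsB0Rep G I) {a b c d : V} (h : IsInducedC4 G a b c d)
    (ha : (I a).horiz = true) (hcf : (I a).horiz = (I c).horiz)
    (hcoord : (I a).coord = (I c).coord) : False := by
  have hb : (I b).horiz = false := by
    have hne := c4_alt hI h
    cases hB : (I b).horiz
    · rfl
    · exact absurd (ha.trans hB.symm) hne
  have hc : (I c).horiz = true := hcf.symm.trans ha
  obtain ⟨h1, h2, h3, h4, h5, h6, e1, e2, e3, e4, m1, m2⟩ := h
  have AB : ((I a).set ∩ (I b).set).Nonempty := (hI a b h1).1 e1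
  have BC : ((I b).set ∩ (I c).set).Nonempty := (hI b c h4).1 e2
  have AC : ¬((I a).set ∩ (I c).set).Nonempty := fun hn => m1 ((hI a c h2).2 hn)
  obtain ⟨pab, pab_a, pab_b⟩ := AB
  obtain ⟨pbc, pbc_b, pbc_c⟩ := BC
  rw [memH ha] at pab_a
  rw [memV hb] at pab_b pbc_b
  rw [memH hc] at pbc_c
  refine AC ⟨((I b).coord, (I a).coord), ?_, ?_⟩
  · rw [memH ha]
    exact ⟨rfl, pab_b.1 ▸ pab_a.2.1, pab_b.1 ▸ pab_a.2.2⟩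
  · rw [memH hc]
    exact ⟨hcoord, pbc_b.1 ▸ pbc_c.2.1, pbc_b.1 ▸ pbc_c.2.2⟩

lemma c4_opp (hI : IsB0Rep G I) {a b c d : V} (h : IsInducedC4 G a b c d) :
    ¬((I a).horiz = (I c).horiz ∧ (I a).coord = (I c).coord) := by
  rintro ⟨hf, hcrd⟩
  cases hA : (I a).horiz
  · exact opp_auxH (sw_rep hI) h (by simp [sw, hA])
      (by simpa [sw] using congrArg (!·) hf) hcrd
  · exact opp_auxH hI h hA hf hcrd

theorem part1 (hI : IsB0Rep G I) : NoC4DiamondRelated G := by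
  intro a b c d h x hx y hy hxy hdr
  have hline := dr_line hI hdr
  have A1 := c4_alt hI h
  have A2 := c4_alt hI (c4_rot h)
  have A3 := c4_alt hI (c4_rot (c4_rot h))
  have A4 := c4_alt hI (c4_rot (c4_rot (c4_rot h)))
  have O1 := c4_opp hI h
  have O2 := c4_opp hI (c4_rot h)
  simp only [Set.mem_insert_iff, Set.mem_singleton_iff] at hx hy
  rcases hx with rfl | rfl | rfl | rfl <;> rcases hy with rfl | rfl | rfl | rfl <;>
    first
      | exact hxy rfl
      | exact A1 hline.1
      | exact A1 hline.1.symm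
      | exact A2 hline.1
      | exact A2 hline.1.symm
      | exact A3 hline.1
      | exact A3 hline.1.symm
      | exact A4 hline.1
      | exact A4 hline.1.symm
      | exact O1 ⟨hline.1, hline.2⟩
      | exact O1 ⟨hline.1.symm, hline.2.symm⟩
      | exact O2 ⟨hline.1, hline.2⟩
      | exact O2 ⟨hline.1.symm, hline.2.symm⟩

end C4
instance : DecidableRel C6bar.Adj := fun i j =>
  decidable_of_iff (i ≠ j ∧ j - i ≠ 1 ∧ i - j ≠ 1) Iff.rfl

theorem part2 {V : Type*} {G : SimpleGraph V} {I : V → Seg} (hI : IsB0Rep G I) :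
    C6barFree G := by
  rintro ⟨f, hinj, hf⟩
  have E : ∀ i j : Fin 6, C6bar.Adj i j → ((I (f i)).set ∩ (I (f j)).set).Nonempty :=
    fun i j h => (hI _ _ (hinj.ne h.1)).1 ((hf i j).1 h)
  have N : ∀ i j : Fin 6, i ≠ j → ¬C6bar.Adj i j →
      ¬((I (f i)).set ∩ (I (f j)).set).Nonempty :=
    fun i j hne hna hn => hna ((hf i j).2 ((hI _ _ (hinj.ne hne)).2 hn))
  exact c6bar_geom (I (f 0)) (I (f 1)) (I (f 2)) (I (f 3)) (I (f 4)) (I (f 5))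
    (E 0 2 (by decide)) (E 2 4 (by decide)) (E 0 4 (by decide))
    (E 1 3 (by decide)) (E 3 5 (by decide)) (E 1 5 (by decide))
    (E 0 3 (by decide)) (E 1 4 (by decide)) (E 2 5 (by decide))
    (N 0 1 (by decide) (by decide)) (N 1 2 (by decide) (by decide))
    (N 2 3 (by decide) (by decide)) (N 3 4 (by decide) (by decide))
    (N 4 5 (by decide) (by decide)) (N 5 0 (by decide) (by decide))

end B0aux

theorem B0VPG_necessary_conditions {V : Type*} [Fintype V]
    (G : SimpleGraph V) (h : IsB0VPG G) :
    NoC4DiamondRelated G ∧ C6barFree G := by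
  obtain ⟨I, hI⟩ := h
  exact ⟨B0aux.part1 hI, B0aux.part2 hI⟩
end

section
/- A finite simple graph G is a cocomparability graph if and only if there exists an umbrella-free ordering of the vertices of G. -/
theorem cocomparability_iff_umbrellaFree {V : Type*} [Fintype V]
    (G : SimpleGraph V) :
    IsCocomparability G ↔ ∃ σ : LinearOrder V, UmbrellaFree G σ := by
  constructor
  · rintro ⟨P, hP⟩
    letI := P
    obtain ⟨s, hs, hrs⟩ := extend_partialOrder ((· ≤ ·) : V → V → Prop)
    haveI := hs
    classical
    let σ : LinearOrder V :=
      { le := s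
        lt := fun a b => s a b ∧ ¬ s b a
        lt_iff_le_not_ge := fun _ _ => Iff.rfl
        le_refl := fun a => refl_of s a
        le_trans := fun a b c => trans_of s
        le_antisymm := fun a b h h' => antisymm_of s h h'
        le_total := fun a b => total_of s a b
        toDecidableLE := fun a b => Classical.dec _ }
    refine ⟨σ, ?_⟩
    intro x y z hxy hyz hadj
    by_contra hcon
    push_neg at hcon
    obtain ⟨h1, h2⟩ := hcon
    have hlt : ∀ a b : V, σ.lt a b → s a b ∧ ¬ s b a := by
      intro a b h
      exact (@lt_iff_le_not_ge V σ.toPreorder a b).mp h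
    have hxy' := hlt x y hxy
    have hyz' := hlt y z hyz
    have hnexy : x ≠ y := by rintro rfl; exact hxy'.2 hxy'.1
    have hneyz : y ≠ z := by rintro rfl; exact hyz'.2 hyz'.1
    have hxz : x ≠ z := G.ne_of_adj hadj
    have cxy : P.le x y ∨ P.le y x := by
      by_contra hc; exact h1 ((hP x y hnexy).mpr hc)
    have cyz : P.le y z ∨ P.le z y := by
      by_contra hc; exact h2 ((hP y z hneyz).mpr hc)
    have pxy : P.le x y := by
      rcases cxy with h | h
      · exact h
      · exact absurd (hrs _ _ h) hxy'.2
    have pyz : P.le y z := by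
      rcases cyz with h | h
      · exact h
      · exact absurd (hrs _ _ h) hyz'.2
    exact (hP x z hxz).mp hadj (Or.inl (P.le_trans _ _ _ pxy pyz))
  · rintro ⟨σ, hσ⟩
    letI := σ
    have ltt : ∀ {a b c : V}, σ.lt a b → σ.lt b c → σ.lt a c := fun h h' => lt_trans h h'
    refine ⟨{ le := fun u v => u = v ∨ (σ.lt u v ∧ ¬ G.Adj u v)
              lt := fun u v => (u = v ∨ (σ.lt u v ∧ ¬ G.Adj u v)) ∧
                ¬ (v = u ∨ (σ.lt v u ∧ ¬ G.Adj v u))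
              lt_iff_le_not_ge := fun _ _ => Iff.rfl
              le_refl := fun a => Or.inl rfl
              le_trans := ?_
              le_antisymm := ?_ }, ?_⟩
    · rintro a b c (rfl | ⟨hab, nab⟩) h
      · exact h
      · rcases h with rfl | ⟨hbc, nbc⟩
        · exact Or.inr ⟨hab, nab⟩
        · refine Or.inr ⟨ltt hab hbc, fun hadj => ?_⟩
          rcases hσ a b c hab hbc hadj with h | h
          · exact nab h
          · exact nbc h
    · rintro a b (rfl | ⟨hab, _⟩) h
      · rfl
      · rcases h with rfl | ⟨hba, _⟩
        · rfl
        · exact absurd (ltt hab hba) (lt_irrefl a)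
    · intro u v huv
      constructor
      · rintro hadj (h | h)
        · rcases h with rfl | ⟨_, na⟩
          · exact huv rfl
          · exact na hadj
        · rcases h with rfl | ⟨_, na⟩
          · exact huv rfl
          · exact na hadj.symm
      · intro hc
        by_contra hadj
        rcases lt_or_gt_of_ne huv with h | h
        · exact hc (Or.inl (Or.inr ⟨h, hadj⟩))
        · exact hc (Or.inr (Or.inr ⟨h, fun ha => hadj ha.symm⟩))
end

section
/- If σ is an umbrella-free ordering of a finite simple graph G, then σ has no forbidden triple: there is no triple of vertices u <_σ v <_σ w such that some path in G from u to w avoids the closed neighborhood of v. -/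
theorem umbrellaFree_aux {V : Type*} (G : SimpleGraph V) (σ : LinearOrder V)
    (h : UmbrellaFree G σ) (v w : V) (hvw : σ.lt v w) :
    ∀ {u : V} (p : G.Walk u w), σ.lt u v →
      (∀ x ∈ p.support, x ≠ v ∧ ¬ G.Adj x v) → False := by
  letI := σ
  intro u p
  induction p with
  | nil => intro huv _; exact lt_irrefl _ (huv.trans hvw)
  | @cons a b c hadj q ih =>
    intro huv havoid
    have hb : b ∈ (SimpleGraph.Walk.cons hadj q).support := by
      simp [SimpleGraph.Walk.support_cons, SimpleGraph.Walk.start_mem_support]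
    rcases lt_trichotomy b v with hlt | heq | hgt
    · exact ih hvw hlt (fun x hx => havoid x (by
        simp [SimpleGraph.Walk.support_cons]; right; exact hx))
    · exact (havoid b hb).1 heq
    · rcases h a v b huv hgt hadj with hav | hvb
      · exact (havoid a (SimpleGraph.Walk.start_mem_support _)).2 hav
      · exact (havoid b hb).2 hvb.symm

theorem umbrellaFree_no_forbidden_triple {V : Type*} [Fintype V]
    (G : SimpleGraph V) (σ : LinearOrder V) (h : UmbrellaFree G σ) :
    ¬ ∃ (u v w : V) (p : G.Walk u w), σ.lt u v ∧ σ.lt v w ∧ p.IsPath ∧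
        ∀ x ∈ p.support, x ≠ v ∧ ¬ G.Adj x v := by
  rintro ⟨u, v, w, p, huv, hvw, _, havoid⟩
  exact umbrellaFree_aux G σ h v w hvw p huv havoid
end

section
/- Cocomparability is preserved under edge contraction: if G is a finite cocomparability graph and xy is an edge of G, then the graph G/xy obtained by contracting xy — the graph on the vertex set V(G) ∖ {y} in which distinct vertices a, b are adjacent iff ab is an edge of G, or a = x and by is an edge of G, or b = x and ay is an edge of G — is a cocomparability graph. -/
/-- The graph obtained from `G` by contracting the edge `xy` onto `x`. -/
def contractEdge {V : Type*} (G : SimpleGraph V) (x y : V) :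
    SimpleGraph {v : V // v ≠ y} where
  Adj a b := a ≠ b ∧ (G.Adj a.1 b.1 ∨ (a.1 = x ∧ G.Adj b.1 y) ∨
    (b.1 = x ∧ G.Adj a.1 y))
  symm := by
    constructor
    rintro a b ⟨hne, h⟩
    refine ⟨hne.symm, ?_⟩
    rcases h with h | ⟨h1, h2⟩ | ⟨h1, h2⟩
    · exact Or.inl h.symm
    · exact Or.inr (Or.inr ⟨h1, h2⟩)
    · exact Or.inr (Or.inl ⟨h1, h2⟩)
  loopless := by
    constructor
    rintro a ⟨hne, -⟩
    exact hne rfl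

theorem cocomparability_contractEdge {V : Type*} [Fintype V]
    (G : SimpleGraph V) (hG : IsCocomparability G) (x y : V)
    (hxy : G.Adj x y) :
    IsCocomparability (contractEdge G x y) := by
  obtain ⟨P, hP⟩ := hG
  have hxyne : x ≠ y := hxy.ne
  have hinc : ¬ (P.le x y ∨ P.le y x) := (hP x y hxyne).mp hxy
  have hnxy : ¬ P.le x y := fun h => hinc (Or.inl h)
  have hnyx : ¬ P.le y x := fun h => hinc (Or.inr h)
  have hP' : ∀ u v : V, u ≠ v → (¬ G.Adj u v ↔ (P.le u v ∨ P.le v u)) := by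
    intro u v huv
    rw [hP u v huv, not_not]
  refine ⟨{
    le := fun a b => P.le a.1 b.1 ∧ (a.1 = x → (b.1 = x ∨ P.le y b.1)) ∧
      (b.1 = x → (a.1 = x ∨ P.le a.1 y))
    lt := fun a b => (P.le a.1 b.1 ∧ (a.1 = x → (b.1 = x ∨ P.le y b.1)) ∧
      (b.1 = x → (a.1 = x ∨ P.le a.1 y))) ∧
      ¬ (P.le b.1 a.1 ∧ (b.1 = x → (a.1 = x ∨ P.le y a.1)) ∧
      (a.1 = x → (b.1 = x ∨ P.le b.1 y)))
    lt_iff_le_not_ge := fun _ _ => Iff.rfl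
    le_refl := fun a => ⟨P.le_refl a.1, fun h => Or.inl h, fun h => Or.inl h⟩
    le_trans := by
      rintro a b c ⟨h1, h2, h3⟩ ⟨h4, h5, h6⟩
      refine ⟨P.le_trans _ _ _ h1 h4, ?_, ?_⟩
      · intro hax
        rcases h2 hax with hbx | hyb
        · exact h5 hbx
        · exact Or.inr (P.le_trans _ _ _ hyb h4)
      · intro hcx
        rcases h6 hcx with hbx | hby
        · exact h3 hbx
        · exact Or.inr (P.le_trans _ _ _ h1 hby)
    le_antisymm := by
      rintro a b ⟨h1, -, -⟩ ⟨h2, -, -⟩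
      exact Subtype.ext (P.le_antisymm _ _ h1 h2) }, ?_⟩
  intro a b hab
  have hab' : a.1 ≠ b.1 := fun h => hab (Subtype.ext h)
  have hay : a.1 ≠ y := a.2
  have hby : b.1 ≠ y := b.2
  rw [iff_not_comm]
  constructor
  · -- comparable implies not adjacent
    rintro (⟨h1, h2, h3⟩ | ⟨h1, h2, h3⟩) ⟨-, hor⟩
    · rcases hor with hadj | ⟨hax, hby'⟩ | ⟨hbx, hay'⟩
      · exact (hP' a.1 b.1 hab').mpr (Or.inl h1) hadj
      · rcases h2 hax with hbx | hyb
        · exact hab' (hax.trans hbx.symm)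
        · exact (hP' b.1 y hby).mpr (Or.inr hyb) hby'
      · rcases h3 hbx with hax | hayle
        · exact hab' (hax.trans hbx.symm)
        · exact (hP' a.1 y hay).mpr (Or.inl hayle) hay'
    · rcases hor with hadj | ⟨hax, hby'⟩ | ⟨hbx, hay'⟩
      · exact (hP' a.1 b.1 hab').mpr (Or.inr h1) hadj
      · rcases h3 hax with hbx | hble
        · exact hab' (hax.trans hbx.symm)
        · exact (hP' b.1 y hby).mpr (Or.inl hble) hby'
      · rcases h2 hbx with hax | hya
        · exact hab' (hax.trans hbx.symm)
        · exact (hP' a.1 y hay).mpr (Or.inr hya) hay'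
  · -- not adjacent implies comparable
    intro hn
    have hnadj : ¬ G.Adj a.1 b.1 := fun h => hn ⟨hab, Or.inl h⟩
    have hc1 : P.le a.1 b.1 ∨ P.le b.1 a.1 := (hP' a.1 b.1 hab').mp hnadj
    by_cases hax : a.1 = x
    · have hbx : b.1 ≠ x := fun h => hab' (hax.trans h.symm)
      have hnby : ¬ G.Adj b.1 y := fun h => hn ⟨hab, Or.inr (Or.inl ⟨hax, h⟩)⟩
      have hc2 : P.le b.1 y ∨ P.le y b.1 := (hP' b.1 y hby).mp hnby
      rcases hc1 with h1 | h1 <;> rcases hc2 with h2 | h2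
      · exact absurd (P.le_trans _ _ _ (hax ▸ h1) h2) hnxy
      · exact Or.inl ⟨h1, fun _ => Or.inr h2, fun h => absurd h hbx⟩
      · exact Or.inr ⟨h1, fun h => absurd h hbx, fun _ => Or.inr h2⟩
      · exact absurd (P.le_trans _ _ _ h2 (hax ▸ h1)) hnyx
    · by_cases hbx : b.1 = x
      · have hnay : ¬ G.Adj a.1 y := fun h => hn ⟨hab, Or.inr (Or.inr ⟨hbx, h⟩)⟩
        have hc2 : P.le a.1 y ∨ P.le y a.1 := (hP' a.1 y hay).mp hnay
        rcases hc1 with h1 | h1 <;> rcases hc2 with h2 | h2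
        · exact Or.inl ⟨h1, fun h => absurd h hax, fun _ => Or.inr h2⟩
        · exact absurd (P.le_trans _ _ _ h2 (hbx ▸ h1)) hnyx
        · exact absurd (P.le_trans _ _ _ (hbx ▸ h1) h2) hnxy
        · exact Or.inr ⟨h1, fun _ => Or.inr h2, fun h => absurd h hax⟩
      · rcases hc1 with h1 | h1
        · exact Or.inl ⟨h1, fun h => absurd h hax, fun h => absurd h hbx⟩
        · exact Or.inr ⟨h1, fun h => absurd h hbx, fun h => absurd h hax⟩
end

section
/- In any B₀-VPG representation v ↦ I_v of a finite simple graph G, if four vertices a, b, c, d form an induced C₄ in G, then no two of the segments I_a, I_b, I_c, I_d are collinear. -/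
section AuxForC4

private lemma seg_convex (s : Seg) : Convex ℝ s.set := by
  rw [Seg.set]
  split_ifs
  · intro x hx y hy α β hα hβ hαβ
    refine ⟨?_, ?_⟩
    · show α * x.2 + β * y.2 = s.coord
      rw [hx.1, hy.1]; linear_combination s.coord * hαβ
    · have := convex_Icc s.lo s.hi hx.2 hy.2 hα hβ hαβ
      simpa using this
  · intro x hx y hy α β hα hβ hαβ
    refine ⟨?_, ?_⟩
    · show α * x.1 + β * y.1 = s.coord
      rw [hx.1, hy.1]; linear_combination s.coord * hαβ
    · have := convex_Icc s.lo s.hi hx.2 hy.2 hα hβ hαβ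
      simpa using this

private lemma mem_horiz {s : Seg} (hs : s.horiz = true) {p : ℝ × ℝ} :
    p ∈ s.set ↔ p.2 = s.coord ∧ p.1 ∈ Set.Icc s.lo s.hi := by
  simp [Seg.set, hs]

private lemma mem_vert {s : Seg} (hs : s.horiz = false) {p : ℝ × ℝ} :
    p ∈ s.set ↔ p.1 = s.coord ∧ p.2 ∈ Set.Icc s.lo s.hi := by
  simp [Seg.set, hs]

private lemma key_real {SA SB SC SD : Set ℝ} (hA : Convex ℝ SA) (hB : Convex ℝ SB)
    (hC : Convex ℝ SC) (hD : Convex ℝ SD)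
    (hAC : ∀ t, t ∈ SA → t ∈ SC → False)
    {tab tcb tad tcd : ℝ}
    (hab1 : tab ∈ SA) (hab2 : tab ∈ SB) (hcb1 : tcb ∈ SC) (hcb2 : tcb ∈ SB)
    (had1 : tad ∈ SA) (had2 : tad ∈ SD) (hcd1 : tcd ∈ SC) (hcd2 : tcd ∈ SD) :
    (SB ∩ SD).Nonempty := by
  have mA : ∀ {x y z : ℝ}, x ∈ SA → y ∈ SA → z ∈ Set.uIcc x y → z ∈ SA :=
    fun hx hy hz => hA.segment_subset hx hy (by rwa [segment_eq_uIcc])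
  have mB : ∀ {x y z : ℝ}, x ∈ SB → y ∈ SB → z ∈ Set.uIcc x y → z ∈ SB :=
    fun hx hy hz => hB.segment_subset hx hy (by rwa [segment_eq_uIcc])
  have mC : ∀ {x y z : ℝ}, x ∈ SC → y ∈ SC → z ∈ Set.uIcc x y → z ∈ SC :=
    fun hx hy hz => hC.segment_subset hx hy (by rwa [segment_eq_uIcc])
  have mD : ∀ {x y z : ℝ}, x ∈ SD → y ∈ SD → z ∈ Set.uIcc x y → z ∈ SD :=
    fun hx hy hz => hD.segment_subset hx hy (by rwa [segment_eq_uIcc])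
  rcases le_total tab tcb with hle | hle
  · have h1 : tad ≤ tcb := by
      by_contra hx; push_neg at hx
      exact hAC tcb (mA hab1 had1 (Set.mem_uIcc.mpr (Or.inl ⟨hle, hx.le⟩))) hcb1
    have h2 : tad ≤ tcd := by
      by_contra hx; push_neg at hx
      exact hAC tad had1 (mC hcd1 hcb1 (Set.mem_uIcc.mpr (Or.inl ⟨hx.le, h1⟩)))
    have h3 : tab ≤ tcd := by
      by_contra hx; push_neg at hx
      exact hAC tcd (mA had1 hab1 (Set.mem_uIcc.mpr (Or.inl ⟨h2, hx.le⟩))) hcd1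
    refine ⟨max tab tad, mB hab2 hcb2 ?_, mD had2 hcd2 ?_⟩
    · exact Set.mem_uIcc.mpr (Or.inl ⟨le_max_left _ _, max_le hle h1⟩)
    · exact Set.mem_uIcc.mpr (Or.inl ⟨le_max_right _ _, max_le h3 h2⟩)
  · have h1 : tcb ≤ tad := by
      by_contra hx; push_neg at hx
      exact hAC tcb (mA had1 hab1 (Set.mem_uIcc.mpr (Or.inl ⟨hx.le, hle⟩))) hcb1
    have h2 : tcd ≤ tad := by
      by_contra hx; push_neg at hx
      exact hAC tad had1 (mC hcb1 hcd1 (Set.mem_uIcc.mpr (Or.inl ⟨h1, hx.le⟩)))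
    have h3 : tcd ≤ tab := by
      by_contra hx; push_neg at hx
      exact hAC tcd (mA hab1 had1 (Set.mem_uIcc.mpr (Or.inl ⟨hx.le, h2⟩))) hcd1
    refine ⟨min tab tad, mB hab2 hcb2 ?_, mD had2 hcd2 ?_⟩
    · exact Set.mem_uIcc.mpr (Or.inr ⟨le_min hle h1, min_le_left _ _⟩)
    · exact Set.mem_uIcc.mpr (Or.inr ⟨le_min h3 h2, min_le_right _ _⟩)

private lemma c4_rotate {V : Type*} {G : SimpleGraph V} {a b c d : V}
    (h : IsInducedC4 G a b c d) : IsInducedC4 G b c d a := by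
  obtain ⟨h1, h2, h3, h4, h5, h6, hab, hbc, hcd, hda, hac, hbd⟩ := h
  exact ⟨h4, h5, h1.symm, h6, h2.symm, h3.symm, hbc, hcd, hda, hab, hbd,
    fun hx => hac hx.symm⟩

private lemma diag_not_collinear {V : Type*} {G : SimpleGraph V} {I : V → Seg}
    (hI : IsB0Rep G I) {a b c d : V} (h : IsInducedC4 G a b c d) :
    ¬ Collinear ℝ ((I a).set ∪ (I c).set) := by
  obtain ⟨hab, hac, had, hbc, hbd, hcd, Aab, Abc, Acd, Ada, Nac, Nbd⟩ := h
  intro hcol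
  obtain ⟨pab, hpab_a, hpab_b⟩ := (hI a b hab).mp Aab
  obtain ⟨pcb, hpcb_b, hpcb_c⟩ := (hI b c hbc).mp Abc
  obtain ⟨pcd, hpcd_c, hpcd_d⟩ := (hI c d hcd).mp Acd
  obtain ⟨pad, hpad_d, hpad_a⟩ := (hI d a had.symm).mp Ada
  obtain ⟨v, hv⟩ := (collinear_iff_of_mem (Set.mem_union_left _ hpab_a)).mp hcol
  set f : ℝ →ᵃ[ℝ] ℝ × ℝ := AffineMap.lineMap pab (v + pab) with hf
  have hfeq : ∀ t : ℝ, f t = t • v + pab := by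
    intro t
    simp [hf, AffineMap.lineMap_apply]
  have hexists : ∀ p ∈ (I a).set ∪ (I c).set, ∃ t, f t = p := by
    intro p hp
    obtain ⟨t, ht⟩ := hv p hp
    refine ⟨t, ?_⟩
    rw [hfeq, ht]
    simp
  obtain ⟨tcb, htcb⟩ := hexists pcb (Or.inr hpcb_c)
  obtain ⟨tcd, htcd⟩ := hexists pcd (Or.inr hpcd_c)
  obtain ⟨tad, htad⟩ := hexists pad (Or.inl hpad_a)
  have h0 : f (0 : ℝ) = pab := by rw [hfeq]; simp
  have hkey := key_real (SA := f ⁻¹' (I a).set) (SB := f ⁻¹' (I b).set)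
      (SC := f ⁻¹' (I c).set) (SD := f ⁻¹' (I d).set)
      ((seg_convex (I a)).affine_preimage f) ((seg_convex (I b)).affine_preimage f)
      ((seg_convex (I c)).affine_preimage f) ((seg_convex (I d)).affine_preimage f)
      (fun t h1 h2 => Nac ((hI a c hac).mpr ⟨f t, h1, h2⟩))
      (tab := 0) (tcb := tcb) (tad := tad) (tcd := tcd)
      (by simp only [Set.mem_preimage]; rw [h0]; exact hpab_a)
      (by simp only [Set.mem_preimage]; rw [h0]; exact hpab_b)
      (by simp only [Set.mem_preimage]; rw [htcb]; exact hpcb_c)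
      (by simp only [Set.mem_preimage]; rw [htcb]; exact hpcb_b)
      (by simp only [Set.mem_preimage]; rw [htad]; exact hpad_a)
      (by simp only [Set.mem_preimage]; rw [htad]; exact hpad_d)
      (by simp only [Set.mem_preimage]; rw [htcd]; exact hpcd_c)
      (by simp only [Set.mem_preimage]; rw [htcd]; exact hpcd_d)
  obtain ⟨t, htB, htD⟩ := hkey
  exact Nbd ((hI b d hbd).mpr ⟨f t, htB, htD⟩)

private lemma adj_not_collinear {V : Type*} {G : SimpleGraph V} {I : V → Seg}
    (hI : IsB0Rep G I) {a b c d : V} (h : IsInducedC4 G a b c d) :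
    ¬ Collinear ℝ ((I a).set ∪ (I b).set) := by
  obtain ⟨hab, hac, had, hbc, hbd, hcd, Aab, Abc, Acd, Ada, Nac, Nbd⟩ := h
  intro hcol
  obtain ⟨r, hrA, hrB⟩ := (hI a b hab).mp Aab
  obtain ⟨q, hqB, hqC⟩ := (hI b c hbc).mp Abc
  obtain ⟨z, hzC, hzD⟩ := (hI c d hcd).mp Acd
  obtain ⟨p, hpD, hpA⟩ := (hI d a had.symm).mp Ada
  have hNAC : ∀ w : ℝ × ℝ, w ∈ (I a).set → w ∈ (I c).set → False :=
    fun w h1 h2 => Nac ((hI a c hac).mpr ⟨w, h1, h2⟩)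
  have hNBD : ∀ w : ℝ × ℝ, w ∈ (I b).set → w ∈ (I d).set → False :=
    fun w h1 h2 => Nbd ((hI b d hbd).mpr ⟨w, h1, h2⟩)
  have hsub : ({p, r, q} : Set (ℝ × ℝ)) ⊆ (I a).set ∪ (I b).set := by
    intro w hw
    rcases hw with rfl | rfl | rfl
    · exact Or.inl hpA
    · exact Or.inl hrA
    · exact Or.inr hqB
  rcases (hcol.subset hsub).wbtw_or_wbtw_or_wbtw with hw | hw | hw
  · -- r ∈ segment p q : the main case
    obtain ⟨α, β, hα, hβ, hαβ, hr⟩ := hw.mem_segment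
    have hr1 : r.1 = α * p.1 + β * q.1 := by rw [← hr]; rfl
    have hr2 : r.2 = α * p.2 + β * q.2 := by rw [← hr]; rfl
    have hcomb : ∀ u w : ℝ, α * u + β * w ∈ Set.uIcc u w := by
      intro u w
      rw [← segment_eq_uIcc]
      exact ⟨α, β, hα, hβ, hαβ, by simp [smul_eq_mul]⟩
    have hIccSub : ∀ {lo hi x y : ℝ}, x ∈ Set.Icc lo hi → y ∈ Set.Icc lo hi →
        Set.uIcc x y ⊆ Set.Icc lo hi :=
      fun hx hy => Set.ordConnected_Icc.uIcc_subset hx hy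
    have hbzero : β = 0 → False := by
      intro hb0
      have hα1 : α = 1 := by linarith
      have hrp : r = p := by rw [← hr, hb0, hα1]; simp
      exact hNBD r hrB (hrp ▸ hpD)
    rcases Or.symm (Bool.eq_false_or_eq_true (I a).horiz) with hA | hA
    · -- A vertical
      obtain ⟨hp1, hp2⟩ := (mem_vert hA).mp hpA
      obtain ⟨hrr1, hrr2⟩ := (mem_vert hA).mp hrA
      have hb0 : β * (q.1 - p.1) = 0 := by
        linear_combination -hr1 + hrr1 - hp1 - p.1 * hαβ
      rcases mul_eq_zero.mp hb0 with hb0 | hqpz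
      · exact hbzero hb0
      have hqp1 : q.1 = p.1 := by linarith [sub_eq_zero.mp hqpz]
      have hrp1 : r.1 = p.1 := by linear_combination hr1 + β * hqp1 + p.1 * hαβ
      rcases Or.symm (Bool.eq_false_or_eq_true (I c).horiz) with hC | hC
      · -- C vertical
        obtain ⟨hq1c, hq2c⟩ := (mem_vert hC).mp hqC
        obtain ⟨hz1c, hz2c⟩ := (mem_vert hC).mp hzC
        rcases Or.symm (Bool.eq_false_or_eq_true (I d).horiz) with hD | hD
        · -- D vertical
          obtain ⟨hp1d, hp2d⟩ := (mem_vert hD).mp hpD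
          obtain ⟨hz1d, hz2d⟩ := (mem_vert hD).mp hzD
          have hmem : r.2 ∈ Set.uIcc p.2 z.2 ∪ Set.uIcc z.2 q.2 :=
            Set.uIcc_subset_uIcc_union_uIcc (by rw [hr2]; exact hcomb _ _)
          rcases hmem with hm | hm
          · exact hNBD r hrB ((mem_vert hD).mpr
              ⟨by rw [hrp1, hp1d], hIccSub hp2d hz2d hm⟩)
          · exact hNAC r hrA ((mem_vert hC).mpr
              ⟨by rw [hrp1, ← hqp1, hq1c], hIccSub hz2c hq2c hm⟩)
        · -- D horizontal
          obtain ⟨hp2d, hp1d⟩ := (mem_horiz hD).mp hpD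
          obtain ⟨hz2d, hz1d⟩ := (mem_horiz hD).mp hzD
          have hz2p : z.2 = p.2 := by rw [hz2d, ← hp2d]
          have hm : r.2 ∈ Set.uIcc p.2 q.2 := by rw [hr2]; exact hcomb _ _
          exact hNAC r hrA ((mem_vert hC).mpr
            ⟨by rw [hrp1, ← hqp1, hq1c], hIccSub (hz2p ▸ hz2c) hq2c hm⟩)
      · -- C horizontal
        obtain ⟨hq2c, hq1c⟩ := (mem_horiz hC).mp hqC
        obtain ⟨hz2c, hz1c⟩ := (mem_horiz hC).mp hzC
        rcases Or.symm (Bool.eq_false_or_eq_true (I d).horiz) with hD | hD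
        · -- D vertical
          obtain ⟨hp1d, hp2d⟩ := (mem_vert hD).mp hpD
          obtain ⟨hz1d, hz2d⟩ := (mem_vert hD).mp hzD
          have hz2q : z.2 = q.2 := by rw [hz2c, ← hq2c]
          have hm : r.2 ∈ Set.uIcc p.2 q.2 := by rw [hr2]; exact hcomb _ _
          exact hNBD r hrB ((mem_vert hD).mpr
            ⟨by rw [hrp1, hp1d], hIccSub hp2d (hz2q ▸ hz2d) hm⟩)
        · -- D horizontal
          obtain ⟨hp2d, hp1d⟩ := (mem_horiz hD).mp hpD
          obtain ⟨hz2d, hz1d⟩ := (mem_horiz hD).mp hzD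
          have hqp2 : q.2 = p.2 := by rw [hq2c, ← hz2c, hz2d, ← hp2d]
          have hrp2 : r.2 = p.2 := by linear_combination hr2 + β * hqp2 + p.2 * hαβ
          exact hNBD r hrB ((mem_horiz hD).mpr
            ⟨by rw [hrp2, hp2d], by rw [hrp1]; exact hp1d⟩)
    · -- A horizontal
      obtain ⟨hp2, hp1⟩ := (mem_horiz hA).mp hpA
      obtain ⟨hrr2, hrr1⟩ := (mem_horiz hA).mp hrA
      have hb0 : β * (q.2 - p.2) = 0 := by
        linear_combination -hr2 + hrr2 - hp2 - p.2 * hαβ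
      rcases mul_eq_zero.mp hb0 with hb0 | hqpz
      · exact hbzero hb0
      have hqp2 : q.2 = p.2 := by linarith [sub_eq_zero.mp hqpz]
      have hrp2 : r.2 = p.2 := by linear_combination hr2 + β * hqp2 + p.2 * hαβ
      rcases Or.symm (Bool.eq_false_or_eq_true (I c).horiz) with hC | hC
      · -- C vertical
        obtain ⟨hq1c, hq2c⟩ := (mem_vert hC).mp hqC
        obtain ⟨hz1c, hz2c⟩ := (mem_vert hC).mp hzC
        rcases Or.symm (Bool.eq_false_or_eq_true (I d).horiz) with hD | hD
        · -- D vertical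
          obtain ⟨hp1d, hp2d⟩ := (mem_vert hD).mp hpD
          obtain ⟨hz1d, hz2d⟩ := (mem_vert hD).mp hzD
          have hqp1 : q.1 = p.1 := by rw [hq1c, ← hz1c, hz1d, ← hp1d]
          have hrp1 : r.1 = p.1 := by linear_combination hr1 + β * hqp1 + p.1 * hαβ
          exact hNBD r hrB ((mem_vert hD).mpr
            ⟨by rw [hrp1, hp1d], by rw [hrp2]; exact hp2d⟩)
        · -- D horizontal
          obtain ⟨hp2d, hp1d⟩ := (mem_horiz hD).mp hpD
          obtain ⟨hz2d, hz1d⟩ := (mem_horiz hD).mp hzD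
          have hz1q : z.1 = q.1 := by rw [hz1c, ← hq1c]
          have hm : r.1 ∈ Set.uIcc p.1 q.1 := by rw [hr1]; exact hcomb _ _
          exact hNBD r hrB ((mem_horiz hD).mpr
            ⟨by rw [hrp2, hp2d], hIccSub hp1d (hz1q ▸ hz1d) hm⟩)
      · -- C horizontal
        obtain ⟨hq2c, hq1c⟩ := (mem_horiz hC).mp hqC
        obtain ⟨hz2c, hz1c⟩ := (mem_horiz hC).mp hzC
        rcases Or.symm (Bool.eq_false_or_eq_true (I d).horiz) with hD | hD
        · -- D vertical
          obtain ⟨hp1d, hp2d⟩ := (mem_vert hD).mp hpD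
          obtain ⟨hz1d, hz2d⟩ := (mem_vert hD).mp hzD
          have hz1p : z.1 = p.1 := by rw [hz1d, ← hp1d]
          have hm : r.1 ∈ Set.uIcc p.1 q.1 := by rw [hr1]; exact hcomb _ _
          exact hNAC r hrA ((mem_horiz hC).mpr
            ⟨by rw [hrp2, ← hqp2, hq2c], hIccSub (hz1p ▸ hz1c) hq1c hm⟩)
        · -- D horizontal
          obtain ⟨hp2d, hp1d⟩ := (mem_horiz hD).mp hpD
          obtain ⟨hz2d, hz1d⟩ := (mem_horiz hD).mp hzD
          have hmem : r.1 ∈ Set.uIcc p.1 z.1 ∪ Set.uIcc z.1 q.1 :=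
            Set.uIcc_subset_uIcc_union_uIcc (by rw [hr1]; exact hcomb _ _)
          rcases hmem with hm | hm
          · exact hNBD r hrB ((mem_horiz hD).mpr
              ⟨by rw [hrp2, hp2d], hIccSub hp1d hz1d hm⟩)
          · exact hNAC r hrA ((mem_horiz hC).mpr
              ⟨by rw [hrp2, ← hqp2, hq2c], hIccSub hz1c hq1c hm⟩)
  · exact hNAC q ((seg_convex (I a)).segment_subset hrA hpA hw.mem_segment) hqC
  · exact hNBD p ((seg_convex (I b)).segment_subset hqB hrB hw.mem_segment) hpD

end AuxForC4

theorem inducedC4_no_two_collinear {V : Type*} [Fintype V]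
    (G : SimpleGraph V) (I : V → Seg) (hI : IsB0Rep G I)
    (a b c d : V) (h : IsInducedC4 G a b c d) :
    ∀ x ∈ ({a, b, c, d} : Set V), ∀ y ∈ ({a, b, c, d} : Set V), x ≠ y →
      ¬ Collinear ℝ ((I x).set ∪ (I y).set) := by
  intro x hx y hy hxy
  simp only [Set.mem_insert_iff, Set.mem_singleton_iff] at hx hy
  have h1 := h
  have h2 := c4_rotate h1
  have h3 := c4_rotate h2
  have h4 := c4_rotate h3
  rcases hx with rfl | rfl | rfl | rfl <;> rcases hy with rfl | rfl | rfl | rfl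
  · exact absurd rfl hxy
  · exact adj_not_collinear hI h1
  · exact diag_not_collinear hI h1
  · rw [Set.union_comm]; exact adj_not_collinear hI h4
  · rw [Set.union_comm]; exact adj_not_collinear hI h1
  · exact absurd rfl hxy
  · exact adj_not_collinear hI h2
  · exact diag_not_collinear hI h2
  · rw [Set.union_comm]; exact diag_not_collinear hI h1
  · rw [Set.union_comm]; exact adj_not_collinear hI h2
  · exact absurd rfl hxy
  · exact adj_not_collinear hI h3
  · exact adj_not_collinear hI h4
  · rw [Set.union_comm]; exact diag_not_collinear hI h2
  · rw [Set.union_comm]; exact adj_not_collinear hI h3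
  · exact absurd rfl hxy
end

section
/- In any B₀-VPG representation v ↦ I_v of a finite simple graph G, if vertices x and y are diamond related in G, then the segments I_x and I_y are collinear. -/
lemma collinear_hline (c : ℝ) : Collinear ℝ {p : ℝ × ℝ | p.2 = c} := by
  rw [collinear_iff_of_mem (show ((0 : ℝ), c) ∈ {p : ℝ × ℝ | p.2 = c} from rfl)]
  refine ⟨(1, 0), fun p hp => ⟨p.1, ?_⟩⟩
  have : p.2 = c := hp
  simp [Prod.ext_iff, this]

lemma collinear_vline (c : ℝ) : Collinear ℝ {p : ℝ × ℝ | p.1 = c} := by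
  rw [collinear_iff_of_mem (show ((c : ℝ), (0 : ℝ)) ∈ {p : ℝ × ℝ | p.1 = c} from rfl)]
  refine ⟨(0, 1), fun p hp => ⟨p.2, ?_⟩⟩
  have : p.1 = c := hp
  simp [Prod.ext_iff, this]

lemma seg_mem_horiz {s : Seg} (hs : s.horiz = true) {p : ℝ × ℝ} (hp : p ∈ s.set) :
    p.2 = s.coord ∧ p.1 ∈ Set.Icc s.lo s.hi := by
  simpa [Seg.set, hs] using hp

lemma seg_mem_vert {s : Seg} (hs : s.horiz = false) {p : ℝ × ℝ} (hp : p ∈ s.set) :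
    p.1 = s.coord ∧ p.2 ∈ Set.Icc s.lo s.hi := by
  simpa [Seg.set, hs] using hp

/-- If `r` meets a horizontal segment `s` and a vertical segment `t`, then `r`
contains the crossing point of their lines. -/
lemma meet_point {s t r : Seg} (hs : s.horiz = true) (ht : t.horiz = false)
    (h1 : (r.set ∩ s.set).Nonempty) (h2 : (r.set ∩ t.set).Nonempty) :
    ((t.coord, s.coord) : ℝ × ℝ) ∈ r.set := by
  obtain ⟨p, hpr, hps⟩ := h1
  obtain ⟨q, hqr, hqt⟩ := h2
  have hps' := seg_mem_horiz hs hps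
  have hqt' := seg_mem_vert ht hqt
  cases hr : r.horiz
  · -- r vertical
    have hpr' := seg_mem_vert hr hpr
    have hqr' := seg_mem_vert hr hqr
    have h1 : t.coord = r.coord := hqt'.1 ▸ hqr'.1
    have hrs : r.set = {p : ℝ × ℝ | p.1 = r.coord ∧ p.2 ∈ Set.Icc r.lo r.hi} := by
      simp [Seg.set, hr]
    rw [hrs]
    exact ⟨h1, hps'.1 ▸ hpr'.2⟩
  · -- r horizontal
    have hpr' := seg_mem_horiz hr hpr
    have hqr' := seg_mem_horiz hr hqr
    have h1 : s.coord = r.coord := hps'.1 ▸ hpr'.1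
    have hrs : r.set = {p : ℝ × ℝ | p.2 = r.coord ∧ p.1 ∈ Set.Icc r.lo r.hi} := by
      simp [Seg.set, hr]
    rw [hrs]
    exact ⟨h1, hqt'.1 ▸ hqr'.2⟩

/-- For a diamond diagonal, the two segments have the same orientation and the
same line coordinate. -/
lemma diag_same_line {V : Type*} {G : SimpleGraph V} {I : V → Seg}
    (hI : IsB0Rep G I) {x y : V} (hd : IsDiamondDiagonal G x y) :
    (I x).horiz = (I y).horiz ∧ (I x).coord = (I y).coord := by
  obtain ⟨hxy, u, w, huw, hux, huy, hwx, hwy, hnadj, haux, hauy, hawx, hawy⟩ := hd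
  have hne : x ≠ y := hxy.ne
  have hxyset : ((I x).set ∩ (I y).set).Nonempty := (hI x y hne).mp hxy
  have hu_x : ((I u).set ∩ (I x).set).Nonempty := (hI u x hux).mp haux
  have hu_y : ((I u).set ∩ (I y).set).Nonempty := (hI u y huy).mp hauy
  have hw_x : ((I w).set ∩ (I x).set).Nonempty := (hI w x hwx).mp hawx
  have hw_y : ((I w).set ∩ (I y).set).Nonempty := (hI w y hwy).mp hawy
  obtain ⟨p, hpx, hpy⟩ := hxyset
  cases hx : (I x).horiz <;> cases hy : (I y).horiz
  · -- both vertical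
    have h1 := seg_mem_vert hx hpx
    have h2 := seg_mem_vert hy hpy
    exact ⟨rfl, h1.1 ▸ h2.1⟩
  · -- x vertical, y horizontal: contradiction
    exfalso
    have hqu := meet_point hy hx hu_y hu_x
    have hqw := meet_point hy hx hw_y hw_x
    exact hnadj ((hI u w huw).mpr ⟨_, hqu, hqw⟩)
  · -- x horizontal, y vertical: contradiction
    exfalso
    have hqu := meet_point hx hy hu_x hu_y
    have hqw := meet_point hx hy hw_x hw_y
    exact hnadj ((hI u w huw).mpr ⟨_, hqu, hqw⟩)
  · -- both horizontal
    have h1 := seg_mem_horiz hx hpx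
    have h2 := seg_mem_horiz hy hpy
    exact ⟨rfl, h1.1 ▸ h2.1⟩

theorem diamondRelated_collinear {V : Type*} [Fintype V]
    (G : SimpleGraph V) (I : V → Seg) (hI : IsB0Rep G I)
    (x y : V) (h : DiamondRelated G x y) :
    Collinear ℝ ((I x).set ∪ (I y).set) := by
  have key : (I x).horiz = (I y).horiz ∧ (I x).coord = (I y).coord := by
    induction h with
    | refl => exact ⟨rfl, rfl⟩
    | tail _ hd ih =>
      obtain ⟨h1, h2⟩ := diag_same_line hI hd
      exact ⟨ih.1.trans h1, ih.2.trans h2⟩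
  obtain ⟨hh, hc⟩ := key
  cases hx : (I x).horiz
  · refine (collinear_vline (I x).coord).subset ?_
    rintro p (hp | hp)
    · exact (seg_mem_vert hx hp).1
    · exact hc ▸ (seg_mem_vert (hh.symm.trans hx) hp).1
  · refine (collinear_hline (I x).coord).subset ?_
    rintro p (hp | hp)
    · exact (seg_mem_horiz hx hp).1
    · exact hc ▸ (seg_mem_horiz (hh.symm.trans hx) hp).1
end

section
/- The complement of C₆ is not a B₀-VPG graph. -/
instance : DecidableRel C6bar.Adj :=
  fun i j => inferInstanceAs (Decidable (i ≠ j ∧ j - i ≠ 1 ∧ i - j ≠ 1))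

/-- Transpose of a segment: swap horizontal/vertical. -/
def Seg.tr (s : Seg) : Seg := ⟨!s.horiz, s.coord, s.lo, s.hi, s.lo_le_hi⟩

lemma Seg.tr_mem (s : Seg) (p : ℝ × ℝ) : p ∈ s.tr.set ↔ (p.2, p.1) ∈ s.set := by
  cases h : s.horiz <;> simp [Seg.set, Seg.tr, h]

lemma Seg.tr_inter (s t : Seg) :
    (s.tr.set ∩ t.tr.set).Nonempty ↔ (s.set ∩ t.set).Nonempty := by
  constructor
  · rintro ⟨p, h1, h2⟩
    exact ⟨(p.2, p.1), (s.tr_mem p).mp h1, (t.tr_mem p).mp h2⟩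
  · rintro ⟨p, h1, h2⟩
    refine ⟨(p.2, p.1), (s.tr_mem _).mpr ?_, (t.tr_mem _).mpr ?_⟩ <;> simpa

lemma bound_lo (D B : Seg) (hB : B.horiz = true) (r q : ℝ × ℝ)
    (hr : r ∈ D.set) (hrc : r.2 = B.coord) (hrlt : r.1 < B.lo)
    (hq : q ∈ D.set) (hdisj : ¬(D.set ∩ B.set).Nonempty) : q.1 < B.lo := by
  by_contra hcon
  push_neg at hcon
  cases hD : D.horiz
  · simp [Seg.set, hD] at hr hq
    have : q.1 = r.1 := hq.1.trans hr.1.symm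
    linarith
  · simp [Seg.set, hD] at hr hq
    refine hdisj ⟨(B.lo, B.coord), ?_, ?_⟩
    · simp [Seg.set, hD]
      exact ⟨by rw [← hrc]; exact hr.1, le_of_lt (lt_of_le_of_lt hr.2.1 hrlt),
        le_trans hcon hq.2.2⟩
    · simp [Seg.set, hB]
      exact B.lo_le_hi

lemma bound_hi (D B : Seg) (hB : B.horiz = true) (r q : ℝ × ℝ)
    (hr : r ∈ D.set) (hrc : r.2 = B.coord) (hrgt : B.hi < r.1)
    (hq : q ∈ D.set) (hdisj : ¬(D.set ∩ B.set).Nonempty) : B.hi < q.1 := by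
  by_contra hcon
  push_neg at hcon
  cases hD : D.horiz
  · simp [Seg.set, hD] at hr hq
    have : q.1 = r.1 := hq.1.trans hr.1.symm
    linarith
  · simp [Seg.set, hD] at hr hq
    refine hdisj ⟨(B.hi, B.coord), ?_, ?_⟩
    · simp [Seg.set, hD]
      exact ⟨by rw [← hrc]; exact hr.1, le_trans hq.2.1 hcon,
        le_of_lt (lt_of_lt_of_le hrgt hr.2.2)⟩
    · simp [Seg.set, hB]
      exact B.lo_le_hi

/-- Core configuration lemma, horizontal case. -/
lemma core (A B D E : Seg) (hA : A.horiz = true) (hB : B.horiz = true)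
    (hAB : (A.set ∩ B.set).Nonempty)
    (hDA : (D.set ∩ A.set).Nonempty)
    (hEB : (E.set ∩ B.set).Nonempty)
    (hDE : (D.set ∩ E.set).Nonempty)
    (hDB : ¬(D.set ∩ B.set).Nonempty)
    (hEA : ¬(E.set ∩ A.set).Nonempty) : False := by
  obtain ⟨p, hpA, hpB⟩ := hAB
  obtain ⟨r, hrD, hrA⟩ := hDA
  obtain ⟨s, hsE, hsB⟩ := hEB
  obtain ⟨q, hqD, hqE⟩ := hDE
  simp [Seg.set, hA] at hpA hrA
  simp [Seg.set, hB] at hpB hsB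
  -- r.1 not in B's interval
  have hrB : r.1 < B.lo ∨ B.hi < r.1 := by
    by_contra hcon
    push_neg at hcon
    exact hDB ⟨r, hrD, by simp [Seg.set, hB]; exact ⟨hrA.1.trans (hpA.1.symm.trans hpB.1),
      hcon.1, hcon.2⟩⟩
  have hsA : s.1 < A.lo ∨ A.hi < s.1 := by
    by_contra hcon
    push_neg at hcon
    exact hEA ⟨s, hsE, by simp [Seg.set, hA]; exact ⟨hsB.1.trans (hpB.1.symm.trans hpA.1),
      hcon.1, hcon.2⟩⟩
  have hrc : r.2 = B.coord := hrA.1.trans (hpA.1.symm.trans hpB.1)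
  have hsc : s.2 = A.coord := hsB.1.trans (hpB.1.symm.trans hpA.1)
  rcases hrB with h1 | h1 <;> rcases hsA with h2 | h2
  · -- both low: A.lo ≤ r.1 < B.lo ≤ s.1 < A.lo
    have := hrA.2.1
    have := hsB.2.1
    linarith
  · -- mixed: q.1 < B.lo and A.hi < q.1, with B.lo ≤ p.1 ≤ A.hi
    have hq1 := bound_lo D B hB r q hrD hrc h1 hqD hDB
    have hq2 := bound_hi E A hA s q hsE hsc h2 hqE hEA
    have := hpB.2.1
    have := hpA.2.2
    linarith
  · -- mixed other way
    have hq1 := bound_hi D B hB r q hrD hrc h1 hqD hDB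
    have hq2 := bound_lo E A hA s q hsE hsc h2 hqE hEA
    have := hpB.2.2
    have := hpA.2.1
    linarith
  · -- both high
    have := hrA.2.2
    have := hsB.2.2
    linarith

/-- Core configuration lemma, general (A and B have the same direction). -/
lemma core' (A B D E : Seg) (hdir : A.horiz = B.horiz)
    (hAB : (A.set ∩ B.set).Nonempty)
    (hDA : (D.set ∩ A.set).Nonempty)
    (hEB : (E.set ∩ B.set).Nonempty)
    (hDE : (D.set ∩ E.set).Nonempty)
    (hDB : ¬(D.set ∩ B.set).Nonempty)
    (hEA : ¬(E.set ∩ A.set).Nonempty) : False := by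
  cases hA : A.horiz
  · exact core A.tr B.tr D.tr E.tr (by simp [Seg.tr, hA]) (by simp [Seg.tr, hdir ▸ hA])
      ((Seg.tr_inter _ _).mpr hAB) ((Seg.tr_inter _ _).mpr hDA)
      ((Seg.tr_inter _ _).mpr hEB) ((Seg.tr_inter _ _).mpr hDE)
      (fun h => hDB ((Seg.tr_inter _ _).mp h)) (fun h => hEA ((Seg.tr_inter _ _).mp h))
  · exact core A B D E hA (hdir ▸ hA) hAB hDA hEB hDE hDB hEA

theorem C6bar_not_B0VPG : ¬ IsB0VPG C6bar := by
  rintro ⟨I, hI⟩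
  have adj : ∀ u v : Fin 6, C6bar.Adj u v → ((I u).set ∩ (I v).set).Nonempty :=
    fun u v h => (hI u v h.ne).mp h
  have nadj : ∀ u v : Fin 6, u ≠ v → ¬C6bar.Adj u v →
      ¬((I u).set ∩ (I v).set).Nonempty :=
    fun u v hne hn hx => hn ((hI u v hne).mpr hx)
  have e02 := adj 0 2 (by decide)
  have e24 := adj 2 4 (by decide)
  have e04 := adj 0 4 (by decide)
  have i30 := adj 3 0 (by decide)
  have i52 := adj 5 2 (by decide)
  have i35 := adj 3 5 (by decide)
  have i14 := adj 1 4 (by decide)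
  have i51 := adj 5 1 (by decide)
  have i31 := adj 3 1 (by decide)
  have n32 := nadj 3 2 (by decide) (by decide)
  have n50 := nadj 5 0 (by decide) (by decide)
  have n54 := nadj 5 4 (by decide) (by decide)
  have n12 := nadj 1 2 (by decide) (by decide)
  have n34 := nadj 3 4 (by decide) (by decide)
  have n10 := nadj 1 0 (by decide) (by decide)
  have tri : (I 0).horiz = (I 2).horiz ∨ (I 2).horiz = (I 4).horiz ∨
      (I 0).horiz = (I 4).horiz := by
    cases (I 0).horiz <;> cases (I 2).horiz <;> cases (I 4).horiz <;> simp
  rcases tri with h | h | h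
  · exact core' (I 0) (I 2) (I 3) (I 5) h e02 i30 i52 i35 n32 n50
  · exact core' (I 2) (I 4) (I 5) (I 1) h e24 i52 i14 i51 n54 n12
  · exact core' (I 0) (I 4) (I 3) (I 1) h e04 i30 i14 i31 n34 n10
end

section
/- Let G be a finite cocomparability graph with a branch partition 𝒫, and let B₁ and B₂ be two adjacent parts of 𝒫. Then B_{1,2} ∪ B_{2,1} induces a clique in G. -/
/-- A branch partition of `G`: a partition of the vertex set into connected
parts such that both endpoints of every diamond diagonal lie in the same part
and no part contains two distinct vertices of a common induced `C₄`. -/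
def IsBranchPartition {V : Type*} (G : SimpleGraph V) (P : Set (Set V)) : Prop :=
  (∀ B ∈ P, B.Nonempty) ∧
  (∀ B ∈ P, ∀ B' ∈ P, B ≠ B' → Disjoint B B') ∧
  (∀ v : V, ∃ B ∈ P, v ∈ B) ∧
  (∀ B ∈ P, (SimpleGraph.induce B G).Connected) ∧
  (∀ x y : V, IsDiamondDiagonal G x y → ∀ B ∈ P, x ∈ B → y ∈ B) ∧
  (∀ a b c d : V, IsInducedC4 G a b c d → ∀ B ∈ P,
     ∀ x ∈ ({a, b, c, d} : Set V), ∀ y ∈ ({a, b, c, d} : Set V),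
       x ≠ y → x ∈ B → y ∉ B)

/-- Two parts are adjacent if some edge of `G` has one endpoint in each. -/
def PartsAdjacent {V : Type*} (G : SimpleGraph V) (B B' : Set V) : Prop :=
  ∃ u ∈ B, ∃ v ∈ B', G.Adj u v

/-- `Bset G Bi Bj` is the set of vertices of `Bi` having a neighbor in `Bj`. -/
def Bset {V : Type*} (G : SimpleGraph V) (Bi Bj : Set V) : Set V :=
  {v ∈ Bi | ∃ u ∈ Bj, G.Adj v u}

attribute [local instance] Classical.propDecidable

namespace BranchProofAux

variable {V : Type*}

def WalkFun (G : SimpleGraph V) (B : Set V) (a b : V) (k : ℕ) (p : ℕ → V) : Prop :=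
  p 0 = a ∧ p k = b ∧ (∀ i, i ≤ k → p i ∈ B) ∧ (∀ i, i < k → G.Adj (p i) (p (i+1)))

lemma exists_walkFun (G : SimpleGraph V) (B : Set V)
    (hB : (SimpleGraph.induce B G).Connected) {a b : V} (ha : a ∈ B) (hb : b ∈ B) :
    ∃ k p, WalkFun G B a b k p := by
  obtain ⟨w⟩ := hB.preconnected ⟨a, ha⟩ ⟨b, hb⟩
  refine ⟨w.length, fun i => ((w.getVert i : B) : V), by simp, by simp,
    fun i _ => (w.getVert i).2, fun i hi => ?_⟩
  simpa using w.adj_getVert_succ hi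

/-- Splice a walk function: replace the section between `i` and `j` by a single step
(d = j - i - 1 removed) when `G.Adj (p i) (p j)`. -/
lemma walkFun_shortcut (G : SimpleGraph V) (B : Set V) (a b : V) (k : ℕ) (p : ℕ → V)
    (hw : WalkFun G B a b k p) (i j : ℕ) (hij : i + 1 ≤ j) (hjk : j ≤ k)
    (hadj : G.Adj (p i) (p j)) :
    WalkFun G B a b (k - (j - i - 1)) (fun m => if m ≤ i then p m else p (m + (j - i - 1))) := by
  obtain ⟨hp0, hpk, hpB, hpadj⟩ := hw
  refine ⟨by simp [hp0], ?_, ?_, ?_⟩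
  · have h1 : ¬ (k - (j - i - 1) ≤ i) := by omega
    have h2 : k - (j - i - 1) + (j - i - 1) = k := by omega
    simp only [h1, if_false, h2, hpk]
  · intro m hm
    by_cases hmi : m ≤ i
    · simpa [hmi] using hpB m (by omega)
    · simpa [hmi] using hpB (m + (j - i - 1)) (by omega)
  · intro m hm
    by_cases hmi : m ≤ i
    · by_cases hmi1 : m + 1 ≤ i
      · simp only []
        rw [if_pos hmi, if_pos hmi1]
        exact hpadj m (by omega)
      · obtain rfl : m = i := by omega
        simp only []
        rw [if_pos hmi, if_neg hmi1]
        have h2 : m + 1 + (j - m - 1) = j := by omega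
        rw [h2]
        exact hadj
    · have hmi1 : ¬ (m + 1 ≤ i) := by omega
      simp only []
      rw [if_neg hmi, if_neg hmi1]
      have h2 : m + 1 + (j - i - 1) = m + (j - i - 1) + 1 := by omega
      rw [h2]
      exact hpadj (m + (j - i - 1)) (by omega)

lemma exists_inducedPath (G : SimpleGraph V) (B : Set V)
    (hB : (SimpleGraph.induce B G).Connected) {a b : V} (ha : a ∈ B) (hb : b ∈ B) :
    ∃ k p, WalkFun G B a b k p ∧
      (∀ i j, i + 2 ≤ j → j ≤ k → ¬ G.Adj (p i) (p j)) ∧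
      (∀ i, i ≤ k → ∀ j, j ≤ k → p i = p j → i = j) := by
  have hex : ∃ k, ∃ p, WalkFun G B a b k p := exists_walkFun G B hB ha hb
  obtain ⟨p, hp⟩ := Nat.find_spec hex
  set k := Nat.find hex with hkdef
  refine ⟨k, p, hp, ?_, ?_⟩
  · intro i j hij hjk hadj
    have hlt : k - (j - i - 1) < k := by omega
    exact Nat.not_lt.mpr (Nat.find_le ⟨_, walkFun_shortcut G B a b k p hp i j (by omega) hjk hadj⟩) hlt
  · -- injectivity
    have key : ∀ i j, i < j → j ≤ k → p i ≠ p j := by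
      intro i j hij hjk heq
      obtain ⟨hp0, hpk, hpB, hpadj⟩ := hp
      by_cases hjkeq : j = k
      · -- truncate at i
        have hlt : i < k := by omega
        refine Nat.not_lt.mpr (Nat.find_le ⟨p, hp0, ?_, fun m hm => hpB m (by omega),
          fun m hm => hpadj m (by omega)⟩) hlt
        rw [heq, hjkeq, hpk]
      · -- p i = p j, j < k: shortcut using edge (p i, p (j+1)) = (p j, p (j+1))
        have hadj : G.Adj (p i) (p (j+1)) := by rw [heq]; exact hpadj j (by omega)
        have hlt : k - (j + 1 - i - 1) < k := by omega
        exact Nat.not_lt.mpr (Nat.find_le ⟨_, walkFun_shortcut G B a b k p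
          ⟨hp0, hpk, hpB, hpadj⟩ i (j+1) (by omega) (by omega) hadj⟩) hlt
    intro i hi j hj heq
    rcases lt_trichotomy i j with h | h | h
    · exact absurd heq (key i j h hj)
    · exact h
    · exact absurd heq.symm (key j i h hi)




lemma pw_one (G : SimpleGraph V) (P : PartialOrder V)
    (hP : ∀ u v : V, u ≠ v → (G.Adj u v ↔ ¬ (P.le u v ∨ P.le v u)))
    (k : ℕ) (hk : 3 ≤ k) (p : ℕ → V) (w : V)
    (hadj : ∀ i, i < k → G.Adj (p i) (p (i+1)))
    (hind : ∀ i j, i + 2 ≤ j → j ≤ k → ¬ G.Adj (p i) (p j))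
    (hinj : ∀ i, i ≤ k → ∀ j, j ≤ k → p i = p j → i = j)
    (hw0 : G.Adj w (p 0))
    (hwne : ∀ m, m ≤ k → w ≠ p m)
    (hbelow : ∀ m, 0 < m → m < k → P.le w (p m)) :
    P.le (p 0) (p k) := by
  have cmp : ∀ u v : V, u ≠ v → ¬ G.Adj u v → (P.le u v ∨ P.le v u) := by
    intro u v hne hna
    by_contra h
    exact hna ((hP u v hne).mpr h)
  have claim : ∀ m, 2 ≤ m → m ≤ k → P.le (p 0) (p m) := by
    intro m hm2
    induction m, hm2 using Nat.le_induction with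
    | base =>
      intro h2k
      rcases cmp (p 0) (p 2) (fun h => by have := hinj 0 (by omega) 2 (by omega) h; omega)
          (hind 0 2 (by omega) (by omega)) with h | h
      · exact h
      · exfalso
        have hw2 : P.le w (p 2) := hbelow 2 (by omega) (by omega)
        have : P.le w (p 0) := P.le_trans _ _ _ hw2 h
        exact (hP w (p 0) (hwne 0 (by omega))).mp hw0 (Or.inl this)
    | succ m hm ih =>
      intro hm1k
      have h0m := ih (by omega)
      rcases cmp (p 0) (p (m+1))
          (fun h => by have := hinj 0 (by omega) (m+1) (by omega) h; omega)
          (hind 0 (m+1) (by omega) (by omega)) with h | h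
      · exact h
      · exfalso
        have : P.le (p (m+1)) (p m) := P.le_trans _ _ _ h h0m
        exact (hP (p m) (p (m+1))
          (fun h' => by have := hinj m (by omega) (m+1) (by omega) h'; omega)).mp
          (hadj m (by omega)) (Or.inr this)
  exact claim k (by omega) (le_refl k)

lemma pw_half (G : SimpleGraph V) (P : PartialOrder V)
    (hP : ∀ u v : V, u ≠ v → (G.Adj u v ↔ ¬ (P.le u v ∨ P.le v u)))
    (k : ℕ) (hk : 3 ≤ k) (p : ℕ → V) (w : V)
    (hadj : ∀ i, i < k → G.Adj (p i) (p (i+1)))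
    (hind : ∀ i j, i + 2 ≤ j → j ≤ k → ¬ G.Adj (p i) (p j))
    (hinj : ∀ i, i ≤ k → ∀ j, j ≤ k → p i = p j → i = j)
    (hw0 : G.Adj w (p 0)) (hwk : G.Adj w (p k))
    (hwne : ∀ m, m ≤ k → w ≠ p m)
    (hbelow : ∀ m, 0 < m → m < k → P.le w (p m)) : False := by
  have h1 : P.le (p 0) (p k) :=
    pw_one G P hP k hk p w hadj hind hinj hw0 hwne hbelow
  have h2 : P.le (p k) (p 0) := by
    have := pw_one G P hP k hk (fun i => p (k - i)) w
      (fun i hi => by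
        show G.Adj (p (k - i)) (p (k - (i+1)))
        have e : k - i = k - (i+1) + 1 := by omega
        rw [e]
        exact (hadj (k - (i+1)) (by omega)).symm)
      (fun i j hij hjk h => hind (k - j) (k - i) (by omega) (by omega) h.symm)
      (fun i hi j hj h => by
        have := hinj (k - i) (by omega) (k - j) (by omega) h
        omega)
      (by simpa using hwk)
      (fun m hm => hwne (k - m) (by omega))
      (fun m h0 hmk => hbelow (k - m) (by omega) (by omega))
    simpa using this
  have heq : p 0 = p k := P.le_antisymm _ _ h1 h2
  have := hinj 0 (by omega) k (le_refl k) heq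
  omega

lemma pw (G : SimpleGraph V) (P : PartialOrder V)
    (hP : ∀ u v : V, u ≠ v → (G.Adj u v ↔ ¬ (P.le u v ∨ P.le v u)))
    (k : ℕ) (hk : 3 ≤ k) (p : ℕ → V) (w : V)
    (hadj : ∀ i, i < k → G.Adj (p i) (p (i+1)))
    (hind : ∀ i j, i + 2 ≤ j → j ≤ k → ¬ G.Adj (p i) (p j))
    (hinj : ∀ i, i ≤ k → ∀ j, j ≤ k → p i = p j → i = j)
    (hw0 : G.Adj w (p 0)) (hwk : G.Adj w (p k))
    (hwm : ∀ m, 0 < m → m < k → ¬ G.Adj w (p m))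
    (hwne : ∀ m, m ≤ k → w ≠ p m) : False := by
  have cmp : ∀ u v : V, u ≠ v → ¬ G.Adj u v → (P.le u v ∨ P.le v u) := by
    intro u v hne hna
    by_contra h
    exact hna ((hP u v hne).mpr h)
  have hconst : (∀ m, 0 < m → m < k → P.le w (p m)) ∨ (∀ m, 0 < m → m < k → P.le (p m) w) := by
    rcases cmp w (p 1) (hwne 1 (by omega)) (hwm 1 (by omega) (by omega)) with h1 | h1
    · left
      have claim : ∀ m, 1 ≤ m → m < k → P.le w (p m) := by
        intro m hm1
        induction m, hm1 using Nat.le_induction with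
        | base => intro _; exact h1
        | succ m hm ih =>
          intro hm1k
          have hwm' := ih (by omega)
          rcases cmp w (p (m+1)) (hwne (m+1) (by omega)) (hwm (m+1) (by omega) hm1k) with h | h
          · exact h
          · exfalso
            have : P.le (p (m+1)) (p m) := P.le_trans _ _ _ h hwm'
            exact (hP (p m) (p (m+1))
              (fun h' => by have := hinj m (by omega) (m+1) (by omega) h'; omega)).mp
              (hadj m (by omega)) (Or.inr this)
      exact fun m h0 => claim m (by omega)
    · right
      have claim : ∀ m, 1 ≤ m → m < k → P.le (p m) w := by
        intro m hm1
        induction m, hm1 using Nat.le_induction with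
        | base => intro _; exact h1
        | succ m hm ih =>
          intro hm1k
          have hwm' := ih (by omega)
          rcases cmp w (p (m+1)) (hwne (m+1) (by omega)) (hwm (m+1) (by omega) hm1k) with h | h
          · exfalso
            have : P.le (p m) (p (m+1)) := P.le_trans _ _ _ hwm' h
            exact (hP (p m) (p (m+1))
              (fun h' => by have := hinj m (by omega) (m+1) (by omega) h'; omega)).mp
              (hadj m (by omega)) (Or.inl this)
          · exact h
      exact fun m h0 => claim m (by omega)
  rcases hconst with hb | hb
  · exact pw_half G P hP k hk p w hadj hind hinj hw0 hwk hwne hb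
  · let Pd : PartialOrder V :=
      { le := fun a b => P.le b a
        lt := fun a b => P.le b a ∧ ¬ P.le a b
        lt_iff_le_not_ge := fun a b => Iff.rfl
        le_refl := fun a => P.le_refl a
        le_trans := fun a b c h1 h2 => P.le_trans c b a h2 h1
        le_antisymm := fun a b h1 h2 => P.le_antisymm a b h2 h1 }
    have hPd : ∀ u v : V, u ≠ v → (G.Adj u v ↔ ¬ (Pd.le u v ∨ Pd.le v u)) := by
      intro u v hne
      rw [hP u v hne]
      constructor
      · intro h h'; exact h h'.symm
      · intro h h'; exact h h'.symm
    exact pw_half G Pd hPd k hk p w hadj hind hinj hw0 hwk hwne hb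


lemma ext_clique (G : SimpleGraph V) (hG : IsCocomparability G)
    (P : Set (Set V)) (hP : IsBranchPartition G P)
    (B : Set V) (hB : B ∈ P) (w : V) (hw : w ∉ B)
    {a b : V} (ha : a ∈ B) (hb : b ∈ B) (hwa : G.Adj w a) (hwb : G.Adj w b)
    (hne : a ≠ b) : G.Adj a b := by
  by_contra hab
  obtain ⟨PO, hPO⟩ := hG
  obtain ⟨k, p, ⟨hp0, hpk, hpB, hpadj⟩, hpind, hpinj⟩ :=
    exists_inducedPath G B (hP.2.2.2.1 B hB) ha hb
  rw [← hp0] at hwa hne hab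
  rw [← hpk] at hwb hne hab
  have hk2 : 2 ≤ k := by
    by_contra h
    interval_cases k
    · exact hne rfl
    · exact hab (hpadj 0 (by omega))
  have hwp : ∀ m, m ≤ k → w ≠ p m := fun m hm heq => hw (heq ▸ hpB m hm)
  by_cases hall : ∀ m, m ≤ k → G.Adj w (p m)
  · -- w adjacent to the whole path: diamond diagonal (p 1, w)
    have dd : IsDiamondDiagonal G (p 1) w := by
      refine ⟨(hall 1 (by omega)).symm, p 0, p 2, ?_, ?_, ?_, ?_, ?_, ?_, ?_, ?_, ?_, ?_⟩
      · exact fun h => by have := hpinj 0 (by omega) 2 (by omega) h; omega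
      · exact fun h => by have := hpinj 0 (by omega) 1 (by omega) h; omega
      · exact fun h => (hwp 0 (by omega)) h.symm
      · exact fun h => by have := hpinj 2 (by omega) 1 (by omega) h; omega
      · exact fun h => (hwp 2 (by omega)) h.symm
      · exact hpind 0 2 (by omega) (by omega)
      · exact hpadj 0 (by omega)
      · exact (hall 0 (by omega)).symm
      · exact (hpadj 1 (by omega)).symm
      · exact (hall 2 (by omega)).symm
    exact hw (hP.2.2.2.2.1 (p 1) w dd B hB (hpB 1 (by omega)))
  · -- there is a gap
    push_neg at hall
    have hQex : ∃ m, m ≤ k ∧ ¬ G.Adj w (p m) := hall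
    obtain ⟨m0, ⟨hm0k, hm0na⟩, hm0min⟩ :
        ∃ m0, (m0 ≤ k ∧ ¬ G.Adj w (p m0)) ∧ ∀ m, m < m0 → ¬ (m ≤ k ∧ ¬ G.Adj w (p m)) :=
      ⟨Nat.find hQex, Nat.find_spec hQex, fun m hm => Nat.find_min hQex hm⟩
    have hm0pos : 1 ≤ m0 := by
      rcases Nat.eq_zero_or_pos m0 with h | h
      · exact absurd hwa (h ▸ hm0na)
      · exact h
    have hm0ltk : m0 < k := by
      rcases Nat.lt_or_ge m0 k with h | h
      · exact h
      · exact absurd hwb ((by omega : m0 = k) ▸ hm0na)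
    have hi : G.Adj w (p (m0 - 1)) := by
      by_contra h
      exact hm0min (m0 - 1) (by omega) ⟨by omega, h⟩
    have hRex : ∃ j', m0 < j' ∧ j' ≤ k ∧ G.Adj w (p j') := ⟨k, hm0ltk, le_refl k, hwb⟩
    obtain ⟨j, ⟨hjm0, hjk, hj⟩, hjmin⟩ :
        ∃ j, (m0 < j ∧ j ≤ k ∧ G.Adj w (p j)) ∧
          ∀ j', j' < j → ¬ (m0 < j' ∧ j' ≤ k ∧ G.Adj w (p j')) :=
      ⟨Nat.find hRex, Nat.find_spec hRex, fun m hm => Nat.find_min hRex hm⟩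
    set i := m0 - 1 with hidef
    have hgap : ∀ m, i < m → m < j → ¬ G.Adj w (p m) := by
      intro m h1 h2
      rcases Nat.lt_or_ge m0 m with h | h
      · intro hadjm
        exact hjmin m h2 ⟨h, by omega, hadjm⟩
      · have : m = m0 := by omega
        exact this ▸ hm0na
    have hij2 : i + 2 ≤ j := by omega
    by_cases hj2 : j = i + 2
    · -- induced C4
      rw [hj2] at hj
      have c4 : IsInducedC4 G (p i) (p (i+1)) (p (i+2)) w := by
        refine ⟨?_, ?_, ?_, ?_, ?_, ?_, ?_, ?_, ?_, ?_, ?_, ?_⟩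
        · exact fun h => by have := hpinj i (by omega) (i+1) (by omega) h; omega
        · exact fun h => by have := hpinj i (by omega) (i+2) (by omega) h; omega
        · exact fun h => (hwp i (by omega)) h.symm
        · exact fun h => by have := hpinj (i+1) (by omega) (i+2) (by omega) h; omega
        · exact fun h => (hwp (i+1) (by omega)) h.symm
        · exact fun h => (hwp (i+2) (by omega)) h.symm
        · exact hpadj i (by omega)
        · exact hpadj (i+1) (by omega)
        · exact hj.symm
        · exact hi
        · exact hpind i (i+2) (by omega) (by omega)
        · exact fun h => hgap (i+1) (by omega) (by omega) h.symm
      have := hP.2.2.2.2.2 (p i) (p (i+1)) (p (i+2)) w c4 B hB (p i) (by simp)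
        (p (i+2)) (by simp)
        (fun h => by have := hpinj i (by omega) (i+2) (by omega) h; omega)
        (hpB i (by omega))
      exact this (hpB (i+2) (by omega))
    · -- long gap: order contradiction
      have hj3 : i + 3 ≤ j := by omega
      exact pw G PO hPO (j - i) (by omega) (fun m => p (i + m)) w
        (fun m hm => by
          show G.Adj (p (i + m)) (p (i + (m + 1)))
          have e : i + (m + 1) = (i + m) + 1 := by omega
          rw [e]
          exact hpadj (i + m) (by omega))
        (fun a' b' hab' hbk' => hpind (i + a') (i + b') (by omega) (by omega))
        (fun a' ha' b' hb' h => by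
          have := hpinj (i + a') (by omega) (i + b') (by omega) h
          omega)
        (by simpa using hi)
        (by
          show G.Adj w (p (i + (j - i)))
          have e : i + (j - i) = j := by omega
          rw [e]
          exact hj)
        (fun m h0 hm => hgap (i + m) (by omega) (by omega))
        (fun m hm => hwp (i + m) (by omega))


def Cfg (G : SimpleGraph V) (B1 B2 : Set V) (t k : ℕ) : Prop :=
  ∃ (x y : V) (q p : ℕ → V),
    x ∈ B1 ∧ y ∈ B2 ∧ ¬ G.Adj x y ∧
    G.Adj x (q 0) ∧ q t = y ∧ (∀ j, j ≤ t → q j ∈ B2) ∧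
    (∀ j, j < t → G.Adj (q j) (q (j+1))) ∧
    (∀ i j, i + 2 ≤ j → j ≤ t → ¬ G.Adj (q i) (q j)) ∧
    (∀ i, i ≤ t → ∀ j, j ≤ t → q i = q j → i = j) ∧
    G.Adj y (p 0) ∧ p k = x ∧ (∀ i, i ≤ k → p i ∈ B1) ∧
    (∀ i, i < k → G.Adj (p i) (p (i+1))) ∧
    (∀ i j, i + 2 ≤ j → j ≤ k → ¬ G.Adj (p i) (p j)) ∧
    (∀ i, i ≤ k → ∀ j, j ≤ k → p i = p j → i = j)

lemma no_cfg (G : SimpleGraph V) (hG : IsCocomparability G)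
    (P : Set (Set V)) (hP : IsBranchPartition G P)
    (B1 B2 : Set V) (h1 : B1 ∈ P) (h2 : B2 ∈ P) (hne : B1 ≠ B2) :
    ¬ ∃ t k, Cfg G B1 B2 t k := by
  intro hTex
  have hd12 : ∀ z, z ∈ B1 → z ∈ B2 → False :=
    fun z hz1 hz2 => Set.disjoint_left.mp (hP.2.1 B1 h1 B2 h2 hne) hz1 hz2
  have hconn1 := hP.2.2.2.1 B1 h1
  obtain ⟨PO, hPO⟩ := hG
  obtain ⟨t, ⟨k0, hk0⟩, htmin⟩ :
      ∃ t, (∃ k, Cfg G B1 B2 t k) ∧ ∀ t', t' < t → ¬ ∃ k, Cfg G B1 B2 t' k :=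
    ⟨Nat.find hTex, Nat.find_spec hTex, fun t' h => Nat.find_min hTex h⟩
  have hKex : ∃ k, Cfg G B1 B2 t k := ⟨k0, hk0⟩
  obtain ⟨k, hCfg, hkmin⟩ :
      ∃ k, Cfg G B1 B2 t k ∧ ∀ k', k' < k → ¬ Cfg G B1 B2 t k' :=
    ⟨Nat.find hKex, Nat.find_spec hKex, fun k' h => Nat.find_min hKex h⟩
  obtain ⟨x, y, q, p, hx1, hy2, hxy, hxq0, hqt, hqB, hqadj, hqind, hqinj,
    hyp0, hpk, hpB, hpadj, hpind, hpinj⟩ := hCfg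
  have ht1 : 1 ≤ t := by
    by_contra h
    have ht0 : t = 0 := by omega
    rw [ht0] at hqt
    exact hxy (hqt ▸ hxq0)
  have hk1 : 1 ≤ k := by
    by_contra h
    have hk0' : k = 0 := by omega
    rw [hk0'] at hpk
    exact hxy ((hpk ▸ hyp0).symm)
  -- F1 : x is non-adjacent to all q j for j ≥ 1
  have F1 : ∀ jj, 1 ≤ jj → jj ≤ t → ¬ G.Adj x (q jj) := by
    intro jj h1j hjt hadjx
    rcases Nat.lt_or_ge jj t with hlt | hge
    · refine htmin (t - jj) (by omega) ⟨k, x, y, (fun m => q (m + jj)), p,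
        hx1, hy2, hxy, by simpa using hadjx, ?_, ?_, ?_, ?_, ?_,
        hyp0, hpk, hpB, hpadj, hpind, hpinj⟩
      · show q (t - jj + jj) = y
        rw [(by omega : t - jj + jj = t)]
        exact hqt
      · exact fun j hj => hqB (j + jj) (by omega)
      · intro j hj
        show G.Adj (q (j + jj)) (q (j + 1 + jj))
        rw [(by omega : j + 1 + jj = (j + jj) + 1)]
        exact hqadj (j + jj) (by omega)
      · exact fun i j hij hjt' => hqind (i + jj) (j + jj) (by omega) (by omega)
      · intro i hi j hj h
        have := hqinj (i + jj) (by omega) (j + jj) (by omega) h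
        omega
    · have : jj = t := by omega
      rw [this, hqt] at hadjx
      exact hxy hadjx
  -- F2 : y is non-adjacent to all p i for i ≥ 1
  have F2 : ∀ ii, 1 ≤ ii → ii ≤ k → ¬ G.Adj y (p ii) := by
    intro ii h1i hik hadjy
    rcases Nat.lt_or_ge ii k with hlt | hge
    · refine hkmin (k - ii) (by omega) ⟨x, y, q, (fun m => p (m + ii)),
        hx1, hy2, hxy, hxq0, hqt, hqB, hqadj, hqind, hqinj,
        by simpa using hadjy, ?_, ?_, ?_, ?_, ?_⟩
      · show p (k - ii + ii) = x
        rw [(by omega : k - ii + ii = k)]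
        exact hpk
      · exact fun i hi => hpB (i + ii) (by omega)
      · intro i hi
        show G.Adj (p (i + ii)) (p (i + 1 + ii))
        rw [(by omega : i + 1 + ii = (i + ii) + 1)]
        exact hpadj (i + ii) (by omega)
      · exact fun i j hij hjk' => hpind (i + ii) (j + ii) (by omega) (by omega)
      · intro i hi j hj h
        have := hpinj (i + ii) (by omega) (j + ii) (by omega) h
        omega
    · have : ii = k := by omega
      rw [this, hpk] at hadjy
      exact hxy hadjy.symm
  -- F3 : no edges between the p path and interior q vertices
  have F3 : ∀ ii, ii ≤ k → ∀ jj, 1 ≤ jj → jj + 1 ≤ t → ¬ G.Adj (p ii) (q jj) := by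
    intro ii hik jj h1j hjt hadj
    obtain ⟨k'', p'', ⟨hp''0, hp''k, hp''B, hp''adj⟩, hp''ind, hp''inj⟩ :=
      exists_inducedPath G B1 hconn1 (hpB ii hik) hx1
    refine htmin jj (by omega) ⟨k'', x, (q jj), q, p'',
      hx1, hqB jj (by omega), F1 jj h1j (by omega), hxq0, rfl,
      (fun j hj => hqB j (by omega)), (fun j hj => hqadj j (by omega)),
      (fun i j hij hjt' => hqind i j hij (by omega)),
      (fun i hi j hj h => hqinj i (by omega) j (by omega) h),
      ?_, hp''k, hp''B, hp''adj, hp''ind, hp''inj⟩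
    rw [hp''0]
    exact hadj.symm
  -- F4 : q 0 is non-adjacent to p ii for ii + 2 ≤ k
  have F4 : ∀ ii, ii + 2 ≤ k → ¬ G.Adj (p ii) (q 0) := by
    intro ii hik hadj
    have hadjpp : G.Adj (p ii) (p k) :=
      ext_clique G ⟨PO, hPO⟩ P hP B1 h1 (q 0)
        (fun hq0B1 => hd12 (q 0) hq0B1 (hqB 0 (by omega)))
        (hpB ii (by omega)) (hpB k (le_refl k)) hadj.symm
        (by rw [hpk]; exact hxq0.symm)
        (fun h => by have := hpinj ii (by omega) k (le_refl k) h; omega)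
    exact hpind ii k hik (le_refl k) hadjpp
  -- main case analysis
  by_cases hch : G.Adj (p (k-1)) (q 0)
  · rcases Nat.lt_or_ge k 2 with hk2 | hk2
    · -- k = 1, so chord is Adj (p 0) (q 0)
      have hk1' : k = 1 := by omega
      rw [(by omega : k - 1 = 0)] at hch
      rcases Nat.lt_or_ge t 3 with ht3 | ht3
      · rcases Nat.lt_or_ge t 2 with ht2 | ht2
        · -- t = 1 : diamond diagonal (p 0, q 0)
          have ht1' : t = 1 := by omega
          have hxp1 : p 1 = x := by rw [← hk1']; exact hpk
          have hyq1 : q 1 = y := by rw [← ht1']; exact hqt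
          have dd : IsDiamondDiagonal G (p 0) (q 0) := by
            refine ⟨hch, x, y, ?_, ?_, ?_, ?_, ?_, hxy, ?_, hxq0, hyp0, ?_⟩
            · exact fun h => hd12 x hx1 (h ▸ hy2)
            · intro h
              rw [← hxp1] at h
              have := hpinj 1 (by omega) 0 (by omega) h
              omega
            · exact fun h => hd12 x hx1 (h ▸ hqB 0 (by omega))
            · exact fun h => hd12 (p 0) (hpB 0 (by omega)) (h ▸ hy2)
            · intro h
              rw [← hyq1] at h
              have := hqinj 1 (by omega) 0 (by omega) h
              omega
            · rw [← hxp1]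
              exact (hpadj 0 (by omega)).symm
            · rw [← hyq1]
              exact (hqadj 0 (by omega)).symm
          exact hd12 (q 0) (hP.2.2.2.2.1 (p 0) (q 0) dd B1 h1 (hpB 0 (by omega)))
            (hqB 0 (by omega))
        · -- t = 2 : induced C4 (p 0, q 0, q 1, q 2) with q 0, q 1 ∈ B2
          have ht2' : t = 2 := by omega
          have hyq2 : q 2 = y := by rw [← ht2']; exact hqt
          have c4 : IsInducedC4 G (p 0) (q 0) (q 1) (q 2) := by
            refine ⟨?_, ?_, ?_, ?_, ?_, ?_, hch, hqadj 0 (by omega), hqadj 1 (by omega),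
              ?_, ?_, hqind 0 2 (by omega) (by omega)⟩
            · exact fun h => hd12 (p 0) (hpB 0 (by omega)) (h ▸ hqB 0 (by omega))
            · exact fun h => hd12 (p 0) (hpB 0 (by omega)) (h ▸ hqB 1 (by omega))
            · exact fun h => hd12 (p 0) (hpB 0 (by omega)) (h ▸ hqB 2 (by omega))
            · exact fun h => by have := hqinj 0 (by omega) 1 (by omega) h; omega
            · exact fun h => by have := hqinj 0 (by omega) 2 (by omega) h; omega
            · exact fun h => by have := hqinj 1 (by omega) 2 (by omega) h; omega
            · rw [hyq2]
              exact hyp0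
            · exact fun h => F3 0 (by omega) 1 (by omega) (by omega) h
          exact hP.2.2.2.2.2 (p 0) (q 0) (q 1) (q 2) c4 B2 h2 (q 0) (by simp)
            (q 1) (by simp)
            (fun h => by have := hqinj 0 (by omega) 1 (by omega) h; omega)
            (hqB 0 (by omega)) (hqB 1 (by omega))
      · -- t ≥ 3 : order contradiction on the cycle p 0, q 0, …, q t
        refine pw G PO hPO t (by omega) (fun m => if m = 0 then p 0 else q (m - 1)) y
          ?_ ?_ ?_ ?_ ?_ ?_ ?_
        · intro m hm
          show G.Adj (if m = 0 then p 0 else q (m - 1)) (if m + 1 = 0 then p 0 else q (m + 1 - 1))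
          by_cases hm0 : m = 0
          · subst hm0
            simp only [if_pos rfl, if_neg (by omega : ¬ (0 + 1 = 0))]
            exact hch
          · simp only [if_neg hm0, if_neg (by omega : ¬ (m + 1 = 0))]
            rw [(by omega : m + 1 - 1 = (m - 1) + 1)]
            exact hqadj (m - 1) (by omega)
        · intro i j hij hjt hadj
          replace hadj : G.Adj (if i = 0 then p 0 else q (i - 1)) (if j = 0 then p 0 else q (j - 1)) := hadj
          by_cases hi0 : i = 0
          · subst hi0
            rw [if_pos rfl, if_neg (by omega : ¬ (j = 0))] at hadj
            exact F3 0 (by omega) (j - 1) (by omega) (by omega) hadj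
          · rw [if_neg hi0, if_neg (by omega : ¬ (j = 0))] at hadj
            exact hqind (i - 1) (j - 1) (by omega) (by omega) hadj
        · intro i hi j hj h
          replace h : (if i = 0 then p 0 else q (i - 1)) = (if j = 0 then p 0 else q (j - 1)) := h
          by_cases hi0 : i = 0
          · by_cases hj0 : j = 0
            · omega
            · rw [if_pos hi0, if_neg hj0] at h
              exact absurd (h ▸ hqB (j-1) (by omega)) fun hc => hd12 (p 0) (hpB 0 (by omega)) hc
          · by_cases hj0 : j = 0
            · rw [if_neg hi0, if_pos hj0] at h
              exact absurd (h ▸ hqB (i-1) (by omega)) fun hc => hd12 (p 0) (hpB 0 (by omega)) hc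
            · rw [if_neg hi0, if_neg hj0] at h
              have := hqinj (i-1) (by omega) (j-1) (by omega) h
              omega
        · show G.Adj y (if (0:ℕ) = 0 then p 0 else q (0 - 1))
          rw [if_pos rfl]
          exact hyp0
        · show G.Adj y (if t = 0 then p 0 else q (t - 1))
          rw [if_neg (by omega : ¬ (t = 0))]
          have := hqadj (t-1) (by omega)
          rw [(by omega : t - 1 + 1 = t), hqt] at this
          exact this.symm
        · intro m h0 hmt
          show ¬ G.Adj y (if m = 0 then p 0 else q (m - 1))
          rw [if_neg (by omega : ¬ (m = 0))]
          intro h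
          have := hqind (m - 1) t (by omega) (le_refl t)
          rw [hqt] at this
          exact this h.symm
        · intro m hm
          show y ≠ (if m = 0 then p 0 else q (m - 1))
          by_cases hm0 : m = 0
          · rw [if_pos hm0]
            exact fun h => hd12 (p 0) (hpB 0 (by omega)) (h ▸ hy2)
          · rw [if_neg hm0]
            intro h
            have := hqinj t (le_refl t) (m - 1) (by omega) (by rw [hqt, h])
            omega
    · -- k ≥ 2 : shorten the p path
      refine hkmin (k - 1) (by omega) ⟨p (k-1), y, q, p,
        hpB (k-1) (by omega), hy2, (fun h => F2 (k-1) (by omega) (by omega) h.symm),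
        hch, hqt, hqB, hqadj, hqind, hqinj, hyp0, rfl,
        (fun i hi => hpB i (by omega)), (fun i hi => hpadj i (by omega)),
        (fun i j hij hjk' => hpind i j hij (by omega)),
        (fun i hi j hj h => hpinj i (by omega) j (by omega) h)⟩
  · -- no chord: the two paths close up to an induced cycle
    rcases Nat.lt_or_ge (k + t) 3 with hkt | hkt
    · -- k = t = 1 : induced C4 (x, q 0, y, p 0) with x, p 0 ∈ B1
      have hk1' : k = 1 := by omega
      have ht1' : t = 1 := by omega
      have hxp1 : p 1 = x := by rw [← hk1']; exact hpk
      have hyq1 : q 1 = y := by rw [← ht1']; exact hqt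
      rw [(by omega : k - 1 = 0)] at hch
      have c4 : IsInducedC4 G x (q 0) y (p 0) := by
        refine ⟨?_, ?_, ?_, ?_, ?_, ?_, hxq0, ?_, hyp0, ?_, hxy, ?_⟩
        · exact fun h => hd12 x hx1 (h ▸ hqB 0 (by omega))
        · exact fun h => hd12 x hx1 (h ▸ hy2)
        · intro h
          rw [← hxp1] at h
          have := hpinj 1 (by omega) 0 (by omega) h
          omega
        · intro h
          rw [← hyq1] at h
          have := hqinj 0 (by omega) 1 (by omega) h
          omega
        · exact fun h => hd12 (p 0) (hpB 0 (by omega)) (h ▸ hqB 0 (by omega))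
        · exact fun h => hd12 (p 0) (hpB 0 (by omega)) (h ▸ hy2)
        · rw [← hyq1]
          exact hqadj 0 (by omega)
        · rw [← hxp1]
          exact hpadj 0 (by omega)
        · exact fun h => hch h.symm
      exact hP.2.2.2.2.2 x (q 0) y (p 0) c4 B1 h1 x (by simp) (p 0) (by simp)
        (fun h => by
          rw [← hxp1] at h
          have := hpinj 1 (by omega) 0 (by omega) h
          omega)
        hx1 (hpB 0 (by omega))
    · -- k + t ≥ 3 : order contradiction on the long cycle
      refine pw G PO hPO (k + t) (by omega) (fun m => if m ≤ k then p m else q (m - k - 1)) y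
        ?_ ?_ ?_ ?_ ?_ ?_ ?_
      · intro m hm
        show G.Adj (if m ≤ k then p m else q (m - k - 1)) (if m + 1 ≤ k then p (m+1) else q (m + 1 - k - 1))
        rcases Nat.lt_or_ge m k with hmk | hmk
        · simp only [if_pos (by omega : m ≤ k), if_pos (by omega : m + 1 ≤ k)]
          exact hpadj m hmk
        · rcases Nat.eq_or_lt_of_le hmk with hmk' | hmk'
          · subst hmk'
            rw [if_pos (le_refl k), if_neg (by omega : ¬ (k + 1 ≤ k)),
              (by omega : k + 1 - k - 1 = 0), hpk]
            exact hxq0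
          · rw [if_neg (by omega : ¬ (m ≤ k)), if_neg (by omega : ¬ (m + 1 ≤ k)),
              (by omega : m + 1 - k - 1 = (m - k - 1) + 1)]
            exact hqadj (m - k - 1) (by omega)
      · intro i j hij hjt hadj
        replace hadj : G.Adj (if i ≤ k then p i else q (i - k - 1)) (if j ≤ k then p j else q (j - k - 1)) := hadj
        by_cases hik : i ≤ k
        · by_cases hjk : j ≤ k
          · rw [if_pos hik, if_pos hjk] at hadj
            exact hpind i j hij hjk hadj
          · rw [if_pos hik, if_neg hjk] at hadj
            rcases Nat.lt_or_ge (j - k - 1) 1 with hj1 | hj1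
            · -- j = k + 1, so i ≤ k - 1
              rw [(by omega : j - k - 1 = 0)] at hadj
              rcases Nat.eq_or_lt_of_le (by omega : i ≤ k - 1) with hi' | hi'
              · rw [hi'] at hadj
                exact hch hadj
              · exact F4 i (by omega) hadj
            · exact F3 i hik (j - k - 1) hj1 (by omega) hadj
        · rw [if_neg hik, if_neg (by omega : ¬ (j ≤ k))] at hadj
          exact hqind (i - k - 1) (j - k - 1) (by omega) (by omega) hadj
      · intro i hi j hj h
        replace h : (if i ≤ k then p i else q (i - k - 1)) = (if j ≤ k then p j else q (j - k - 1)) := h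
        by_cases hik : i ≤ k
        · by_cases hjk : j ≤ k
          · rw [if_pos hik, if_pos hjk] at h
            exact hpinj i hik j hjk h
          · rw [if_pos hik, if_neg hjk] at h
            exact absurd (hqB (j - k - 1) (by omega)) fun hc => hd12 (p i) (hpB i hik) (h ▸ hc)
        · by_cases hjk : j ≤ k
          · rw [if_neg hik, if_pos hjk] at h
            exact absurd (hqB (i - k - 1) (by omega)) fun hc => hd12 (p j) (hpB j hjk) (h.symm ▸ hc)
          · rw [if_neg hik, if_neg hjk] at h
            have := hqinj (i - k - 1) (by omega) (j - k - 1) (by omega) h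
            omega
      · show G.Adj y (if (0:ℕ) ≤ k then p 0 else q (0 - k - 1))
        rw [if_pos (by omega : (0:ℕ) ≤ k)]
        exact hyp0
      · show G.Adj y (if k + t ≤ k then p (k+t) else q (k + t - k - 1))
        rw [if_neg (by omega : ¬ (k + t ≤ k)), (by omega : k + t - k - 1 = t - 1)]
        have := hqadj (t-1) (by omega)
        rw [(by omega : t - 1 + 1 = t), hqt] at this
        exact this.symm
      · intro m h0 hmt
        show ¬ G.Adj y (if m ≤ k then p m else q (m - k - 1))
        by_cases hmk : m ≤ k
        · rw [if_pos hmk]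
          exact F2 m (by omega) hmk
        · rw [if_neg hmk]
          intro h
          have := hqind (m - k - 1) t (by omega) (le_refl t)
          rw [hqt] at this
          exact this h.symm
      · intro m hm
        show y ≠ (if m ≤ k then p m else q (m - k - 1))
        by_cases hmk : m ≤ k
        · rw [if_pos hmk]
          exact fun h => hd12 (p m) (hpB m hmk) (h ▸ hy2)
        · rw [if_neg hmk]
          intro h
          have := hqinj t (le_refl t) (m - k - 1) (by omega) (by rw [hqt, h])
          omega

lemma cross_adj (G : SimpleGraph V) (hG : IsCocomparability G)
    (P : Set (Set V)) (hP : IsBranchPartition G P)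
    (B1 B2 : Set V) (h1 : B1 ∈ P) (h2 : B2 ∈ P) (hne : B1 ≠ B2)
    {x y : V} (hx : x ∈ Bset G B1 B2) (hy : y ∈ Bset G B2 B1) :
    G.Adj x y := by
  obtain ⟨hx1, x', hx'2, hxx'⟩ := hx
  obtain ⟨hy2, y', hy'1, hyy'⟩ := hy
  by_contra hxy
  apply no_cfg G hG P hP B1 B2 h1 h2 hne
  obtain ⟨t, q, ⟨hq0, hqt, hqB, hqadj⟩, hqind, hqinj⟩ :=
    exists_inducedPath G B2 (hP.2.2.2.1 B2 h2) hx'2 hy2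
  obtain ⟨k, p, ⟨hp0, hpk, hpB, hpadj⟩, hpind, hpinj⟩ :=
    exists_inducedPath G B1 (hP.2.2.2.1 B1 h1) hy'1 hx1
  exact ⟨t, k, x, y, q, p, hx1, hy2, hxy, (by rw [hq0]; exact hxx'), hqt, hqB,
    hqadj, hqind, hqinj, (by rw [hp0]; exact hyy'), hpk, hpB, hpadj, hpind, hpinj⟩

lemma same_side_adj (G : SimpleGraph V) (hG : IsCocomparability G)
    (P : Set (Set V)) (hP : IsBranchPartition G P)
    (B1 B2 : Set V) (h1 : B1 ∈ P) (h2 : B2 ∈ P) (hne : B1 ≠ B2)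
    {a b : V} (ha : a ∈ Bset G B1 B2) (hb : b ∈ Bset G B1 B2) (hab : a ≠ b) :
    G.Adj a b := by
  obtain ⟨ha1, a', ha'2, haa'⟩ := ha
  obtain ⟨hb1, hbex⟩ := hb
  have ha'N : a' ∈ Bset G B2 B1 := ⟨ha'2, a, ha1, haa'.symm⟩
  have hba' : G.Adj b a' := cross_adj G hG P hP B1 B2 h1 h2 hne ⟨hb1, hbex⟩ ha'N
  exact ext_clique G hG P hP B1 h1 a'
    (fun h => Set.disjoint_left.mp (hP.2.1 B1 h1 B2 h2 hne) h ha'2)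
    ha1 hb1 haa'.symm hba'.symm hab

end BranchProofAux

theorem branch_boundary_clique {V : Type*} [Fintype V]
    (G : SimpleGraph V) (hG : IsCocomparability G)
    (P : Set (Set V)) (hP : IsBranchPartition G P)
    (B1 B2 : Set V) (h1 : B1 ∈ P) (h2 : B2 ∈ P) (hne : B1 ≠ B2)
    (hadj : PartsAdjacent G B1 B2) :
    G.IsClique (Bset G B1 B2 ∪ Bset G B2 B1) := by
  rw [SimpleGraph.isClique_iff]
  intro u hu v hv huv
  rcases hu with hu | hu <;> rcases hv with hv | hv
  · exact BranchProofAux.same_side_adj G hG P hP B1 B2 h1 h2 hne hu hv huv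
  · exact BranchProofAux.cross_adj G hG P hP B1 B2 h1 h2 hne hu hv
  · exact (BranchProofAux.cross_adj G hG P hP B1 B2 h1 h2 hne hv hu).symm
  · exact BranchProofAux.same_side_adj G hG P hP B2 B1 h2 h1 hne.symm hu hv huv
end

section
/- Let G be a finite cocomparability graph with a branch partition 𝒫, and let B₀, …, B_{k−1} be distinct parts of 𝒫 with k = 3 or k = 4 such that cyclically consecutive parts are adjacent and, when k = 4, the non-consecutive pairs (B₀, B₂) and (B₁, B₃) are non-adjacent. Then for each i (indices mod k) the set B_{i,i−1} ∩ B_{i,i+1} is nonempty, and there exists an induced cycle b₀, b₁, …, b_{k−1} in G with b_i ∈ B_i for every i. -/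
/-! ### Auxiliary machinery for `branch_cycle_lifts` -/

section BranchCycleAux

variable {V : Type*}

/-- Auxiliary graph: `G` restricted to `U`, with all `B0`–`B1` cross edges removed. -/
@[reducible] private def Hgraph (G : SimpleGraph V) (U B0 B1 : Set V) : SimpleGraph V where
  Adj x y := G.Adj x y ∧ x ∈ U ∧ y ∈ U ∧ ¬ ((x ∈ B0 ∧ y ∈ B1) ∨ (x ∈ B1 ∧ y ∈ B0))
  symm := by
    constructor
    intro x y h
    exact ⟨h.1.symm, h.2.2.1, h.2.1, by tauto⟩
  loopless := ⟨fun x h => G.loopless.irrefl x h.1⟩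

private lemma dist_tri {H : SimpleGraph V} {x y z : V}
    (h1 : H.Reachable x y) (h2 : H.Reachable y z) :
    H.dist x z ≤ H.dist x y + H.dist y z := by
  obtain ⟨p, hp⟩ := h1.exists_walk_length_eq_dist
  obtain ⟨q, hq⟩ := h2.exists_walk_length_eq_dist
  calc H.dist x z ≤ (p.append q).length := SimpleGraph.dist_le _
    _ = H.dist x y + H.dist y z := by rw [SimpleGraph.Walk.length_append, hp, hq]

private lemma getVert_reach_dist {H : SimpleGraph V} {u v : V} (w : H.Walk u v) :
    ∀ i j : ℕ, i ≤ j → j ≤ w.length →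
      H.Reachable (w.getVert i) (w.getVert j) ∧ H.dist (w.getVert i) (w.getVert j) ≤ j - i := by
  intro i j hij
  induction j, hij using Nat.le_induction with
  | base => intro _; exact ⟨SimpleGraph.Reachable.refl _, by simp [SimpleGraph.dist_self]⟩
  | succ j hj ih =>
    intro hjm
    have hlt : j < w.length := by omega
    have hadj := w.adj_getVert_succ hlt
    obtain ⟨hr, hd⟩ := ih (by omega)
    refine ⟨hr.trans hadj.reachable, ?_⟩
    have h1 : H.dist (w.getVert j) (w.getVert (j+1)) ≤ 1 := by
      have := SimpleGraph.dist_le (SimpleGraph.Walk.cons hadj SimpleGraph.Walk.nil)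
      simpa using this
    have := dist_tri hr hadj.reachable
    omega

private lemma hole_core {G : SimpleGraph V} (le : V → V → Prop)
    (htrans : ∀ a b c, le a b → le b c → le a c)
    (hanti : ∀ a b, le a b → le b a → a = b)
    (hcompat : ∀ u v : V, u ≠ v → (G.Adj u v ↔ ¬ (le u v ∨ le v u)))
    (m : ℕ) (hm : 4 ≤ m) (p : ℕ → V)
    (hinj : ∀ i j, i ≤ m → j ≤ m → p i = p j → i = j)
    (hchar : ∀ i j, i < j → j ≤ m → (G.Adj (p i) (p j) ↔ (j = i + 1 ∨ (i = 0 ∧ j = m))))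
    (h02 : le (p 0) (p 2)) : False := by
  have hne : ∀ i j, i ≤ m → j ≤ m → i ≠ j → p i ≠ p j := by
    intro i j hi hj hij h
    exact hij (hinj i j hi hj h)
  have hnadj : ∀ i j, i < j → j ≤ m → j ≠ i + 1 → ¬ (i = 0 ∧ j = m) → ¬ G.Adj (p i) (p j) := by
    intro i j h1 h2 h3 h4 h
    rcases (hchar i j h1 h2).mp h with h' | h' <;> tauto
  have hadjc : ∀ i, i < m → G.Adj (p i) (p (i + 1)) := by
    intro i hi
    exact (hchar i (i+1) (by omega) (by omega)).mpr (Or.inl rfl)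
  have hadj0m : G.Adj (p 0) (p m) :=
    (hchar 0 m (by omega) le_rfl).mpr (Or.inr ⟨rfl, rfl⟩)
  have claimC : ∀ a b c : V, G.Adj a b → c ≠ a → c ≠ b →
      ¬ G.Adj c a → ¬ G.Adj c b → le c a → le c b := by
    intro a b c hab hca hcb hna hnb hle
    have hcomp : le c b ∨ le b c := by
      by_contra h
      exact hnb ((hcompat c b hcb).mpr h)
    rcases hcomp with h | h
    · exact h
    · exfalso
      exact (hcompat a b hab.ne).mp hab (Or.inr (htrans b c a h hle))
  have claimC' : ∀ a b c : V, G.Adj a b → c ≠ a → c ≠ b →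
      ¬ G.Adj c a → ¬ G.Adj c b → le a c → le b c := by
    intro a b c hab hca hcb hna hnb hle
    have hcomp : le b c ∨ le c b := by
      by_contra h
      push_neg at h
      exact hnb ((hcompat c b hcb).mpr (by tauto))
    rcases hcomp with h | h
    · exact h
    · exfalso
      exact (hcompat a b hab.ne).mp hab (Or.inl (htrans a c b hle h))
  have N1 : ∀ j, 2 ≤ j → j ≤ m - 1 → ¬ G.Adj (p 0) (p j) := by
    intro j h1 h2
    exact hnadj 0 j (by omega) (by omega) (by omega) (by omega)
  have step1 : ∀ j, 2 ≤ j → j ≤ m - 1 → le (p 0) (p j) := by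
    intro j hj
    induction j, hj using Nat.le_induction with
    | base => intro _; exact h02
    | succ j hj ih =>
      intro hjm
      exact claimC (p j) (p (j+1)) (p 0) (hadjc j (by omega))
        (hne 0 j (by omega) (by omega) (by omega))
        (hne 0 (j+1) (by omega) (by omega) (by omega))
        (N1 j (by omega) (by omega)) (N1 (j+1) (by omega) (by omega)) (ih (by omega))
  have h0m1 : le (p 0) (p (m - 1)) := step1 (m-1) (by omega) le_rfl
  have N02 : ¬ G.Adj (p 0) (p 2) := N1 2 le_rfl (by omega)
  have N2m : ¬ G.Adj (p 2) (p m) := hnadj 2 m (by omega) le_rfl (by omega) (by omega)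
  have hm2 : le (p m) (p 2) :=
    claimC' (p 0) (p m) (p 2) hadj0m
      (hne 2 0 (by omega) (by omega) (by omega))
      (hne 2 m (by omega) (by omega) (by omega))
      (fun h => N02 h.symm) N2m h02
  have N1m : ¬ G.Adj (p 1) (p m) := hnadj 1 m (by omega) le_rfl (by omega) (by omega)
  have hm1 : le (p m) (p 1) :=
    claimC (p 2) (p 1) (p m) (hadjc 1 (by omega)).symm
      (hne m 2 le_rfl (by omega) (by omega))
      (hne m 1 le_rfl (by omega) (by omega))
      (fun h => N2m h.symm) (fun h => N1m h.symm) hm2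
  have N1m1 : ¬ G.Adj (p 1) (p (m - 1)) :=
    hnadj 1 (m-1) (by omega) (by omega) (by omega) (by omega)
  have hadjm1 : G.Adj (p (m-1)) (p m) := by
    have e : m - 1 + 1 = m := by omega
    have := hadjc (m-1) (by omega)
    rwa [e] at this
  have hm11 : le (p (m - 1)) (p 1) :=
    claimC' (p m) (p (m-1)) (p 1) hadjm1.symm
      (hne 1 m (by omega) le_rfl (by omega))
      (hne 1 (m-1) (by omega) (by omega) (by omega))
      N1m N1m1 hm1
  have N01 : ¬ G.Adj (p (m-1)) (p 0) := fun h => N1 (m-1) (by omega) le_rfl h.symm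
  have hfin : le (p (m - 1)) (p 0) :=
    claimC (p 1) (p 0) (p (m-1)) (hadjc 0 (by omega)).symm
      (hne (m-1) 1 (by omega) (by omega) (by omega))
      (hne (m-1) 0 (by omega) (by omega) (by omega))
      (fun h => N1m1 h.symm) N01 hm11
  have := hanti _ _ h0m1 hfin
  have := hinj 0 (m-1) (by omega) (by omega) this
  omega

private lemma no_long_hole {G : SimpleGraph V} (hG : IsCocomparability G)
    (m : ℕ) (hm : 4 ≤ m) (p : ℕ → V)
    (hinj : ∀ i j, i ≤ m → j ≤ m → p i = p j → i = j)
    (hchar : ∀ i j, i < j → j ≤ m → (G.Adj (p i) (p j) ↔ (j = i + 1 ∨ (i = 0 ∧ j = m)))) :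
    False := by
  obtain ⟨P, hle⟩ := hG
  have hne02 : p 0 ≠ p 2 := fun h => by have := hinj 0 2 (by omega) (by omega) h; omega
  have hnadj02 : ¬ G.Adj (p 0) (p 2) := by
    intro h
    rcases (hchar 0 2 (by omega) (by omega)).mp h with h' | h' <;> omega
  have hcomp : P.le (p 0) (p 2) ∨ P.le (p 2) (p 0) := by
    by_contra h
    exact hnadj02 ((hle _ _ hne02).mpr h)
  rcases hcomp with h | h
  · exact hole_core P.le (fun a b c => P.le_trans a b c) (fun a b => P.le_antisymm a b)
      hle m hm p hinj hchar h
  · exact hole_core (fun a b => P.le b a) (fun a b c hab hbc => P.le_trans c b a hbc hab)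
      (fun a b h1 h2 => P.le_antisymm a b h2 h1)
      (fun u v huv => by rw [hle u v huv, or_comm]) m hm p hinj hchar h

private lemma pathlemma (G : SimpleGraph V) (U B0 B1 : Set V)
    (hre : ∀ a b : V, a ∈ B0 → b ∈ B1 → G.Adj a b → (Hgraph G U B0 B1).Reachable a b)
    (hex : ∃ a ∈ B0, ∃ b ∈ B1, G.Adj a b) :
    ∃ (m : ℕ) (p : ℕ → V), 2 ≤ m ∧ p 0 ∈ B0 ∧ p m ∈ B1 ∧ G.Adj (p 0) (p m) ∧
      (∀ i, i < m → (Hgraph G U B0 B1).Adj (p i) (p (i+1))) ∧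
      (∀ i, i ≤ m → p i ∈ U) ∧
      (∀ i j, i ≤ m → j ≤ m → p i = p j → i = j) ∧
      (∀ i j, i < j → j ≤ m → (G.Adj (p i) (p j) ↔ (j = i + 1 ∨ (i = 0 ∧ j = m)))) := by
  set H := Hgraph G U B0 B1 with hH
  set T : Set ℕ := {n | ∃ a ∈ B0, ∃ b ∈ B1, G.Adj a b ∧ H.dist a b = n} with hT
  have hTne : T.Nonempty := by
    obtain ⟨a, ha, b, hb, hab⟩ := hex
    exact ⟨H.dist a b, a, ha, b, hb, hab, rfl⟩
  obtain ⟨u0, hu0, u1, hu1, hadj01, hdist01⟩ := Nat.sInf_mem hTne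
  have hmin : ∀ a b : V, a ∈ B0 → b ∈ B1 → G.Adj a b → sInf T ≤ H.dist a b := by
    intro a b ha hb hab
    exact Nat.sInf_le ⟨a, ha, b, hb, hab, rfl⟩
  obtain ⟨w, hw⟩ := (hre u0 u1 hu0 hu1 hadj01).exists_walk_length_eq_dist
  set m := w.length with hm
  set p : ℕ → V := w.getVert with hp
  have hp0 : p 0 = u0 := w.getVert_zero
  have hpm : p m = u1 := w.getVert_length
  have hdm : H.dist u0 u1 = m := hw.symm
  have hHadj : ∀ i, i < m → H.Adj (p i) (p (i+1)) := fun i hi => w.adj_getVert_succ hi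
  have hup : ∀ i j, i ≤ j → j ≤ m → H.dist (p i) (p j) ≤ j - i :=
    fun i j h1 h2 => (getVert_reach_dist w i j h1 h2).2
  have hreach : ∀ i j, i ≤ j → j ≤ m → H.Reachable (p i) (p j) :=
    fun i j h1 h2 => (getVert_reach_dist w i j h1 h2).1
  have hlow : ∀ i j, i ≤ j → j ≤ m → j ≤ i + H.dist (p i) (p j) := by
    intro i j h1 h2
    have t1 : H.dist (p 0) (p m) ≤ H.dist (p 0) (p i) + H.dist (p i) (p m) :=
      dist_tri (hreach 0 i (by omega) (by omega)) (hreach i m (by omega) le_rfl)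
    have t2 : H.dist (p i) (p m) ≤ H.dist (p i) (p j) + H.dist (p j) (p m) :=
      dist_tri (hreach i j h1 h2) (hreach j m h2 le_rfl)
    have d1 : H.dist (p 0) (p i) ≤ i := by have := hup 0 i (by omega) (by omega); omega
    have d2 : H.dist (p j) (p m) ≤ m - j := hup j m h2 le_rfl
    have dm : H.dist (p 0) (p m) = m := by rw [hp0, hpm]; exact hdm
    omega
  have hinj : ∀ i j, i ≤ m → j ≤ m → p i = p j → i = j := by
    intro i j hi hj h
    rcases le_total i j with hle | hle
    · have := hlow i j hle hj
      rw [h, SimpleGraph.dist_self] at this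
      omega
    · have := hlow j i hle hi
      simp only [h, SimpleGraph.dist_self] at this
      omega
  have hm2 : 2 ≤ m := by
    rcases Nat.lt_or_ge m 2 with h | h
    · exfalso
      interval_cases m
      · exact hadj01.ne (by rw [← hp0, ← hpm])
      · have := hHadj 0 (by omega)
        rw [hp0] at this
        have h1 : p 1 = u1 := hpm
        rw [h1] at this
        exact this.2.2.2 (Or.inl ⟨hu0, hu1⟩)
    · exact h
  have hU : ∀ i, i ≤ m → p i ∈ U := by
    intro i hi
    rcases Nat.lt_or_ge i m with h | h
    · exact (hHadj i h).2.1
    · have hi' : i = m := by omega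
      have := hHadj (m-1) (by omega)
      have e : m - 1 + 1 = m := by omega
      rw [e] at this
      rw [hi']
      exact this.2.2.1
  refine ⟨m, p, hm2, by rw [hp0]; exact hu0, by rw [hpm]; exact hu1,
    by rw [hp0, hpm]; exact hadj01, hHadj, hU, hinj, ?_⟩
  intro i j hij hjm
  constructor
  · intro hGadj
    by_contra hcon
    push_neg at hcon
    obtain ⟨hne1, hne2⟩ := hcon
    by_cases hHa : H.Adj (p i) (p j)
    · have hd1 : H.dist (p i) (p j) ≤ 1 := by
        have := SimpleGraph.dist_le (SimpleGraph.Walk.cons hHa SimpleGraph.Walk.nil)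
        simpa using this
      have := hlow i j (by omega) hjm
      omega
    · have hcross : (p i ∈ B0 ∧ p j ∈ B1) ∨ (p i ∈ B1 ∧ p j ∈ B0) := by
        by_contra hc
        exact hHa ⟨hGadj, hU i (by omega), hU j hjm, hc⟩
      have hd : H.dist (p i) (p j) ≤ j - i := hup i j (by omega) hjm
      have hge : sInf T ≤ H.dist (p i) (p j) := by
        rcases hcross with ⟨h1, h2⟩ | ⟨h1, h2⟩
        · exact hmin (p i) (p j) h1 h2 hGadj
        · have := hmin (p j) (p i) h2 h1 hGadj.symm
          rwa [SimpleGraph.dist_comm] at this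
      have hsm : sInf T = m := by rw [← hdist01, hdm]
      have hne2' : ¬ (i = 0 ∧ j = m) := fun hh => hne2 hh.1 hh.2
      omega
  · intro h
    rcases h with rfl | ⟨rfl, rfl⟩
    · exact (hHadj i (by omega)).1
    · rw [hp0, hpm]; exact hadj01

private lemma inpart_reach (G : SimpleGraph V) (U B0 B1 Bx : Set V)
    (hconn : (SimpleGraph.induce Bx G).Connected)
    (hedge : ∀ x y : V, x ∈ Bx → y ∈ Bx → G.Adj x y → (Hgraph G U B0 B1).Adj x y)
    {x y : V} (hx : x ∈ Bx) (hy : y ∈ Bx) : (Hgraph G U B0 B1).Reachable x y := by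
  let f : SimpleGraph.induce Bx G →g Hgraph G U B0 B1 :=
    ⟨Subtype.val, by
      intro a b hab
      exact hedge a.1 b.1 a.2 b.2 hab⟩
  exact SimpleGraph.Reachable.map f (hconn.preconnected ⟨x, hx⟩ ⟨y, hy⟩)

private lemma triangle_lemma (G : SimpleGraph V) (hG : IsCocomparability G)
    (B0 B1 B2 : Set V)
    (hconn0 : (SimpleGraph.induce B0 G).Connected)
    (hconn1 : (SimpleGraph.induce B1 G).Connected)
    (hconn2 : (SimpleGraph.induce B2 G).Connected)
    (hd01 : Disjoint B0 B1) (hd02 : Disjoint B0 B2) (hd12 : Disjoint B1 B2)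
    (h01 : PartsAdjacent G B0 B1) (h12 : PartsAdjacent G B1 B2)
    (h20 : PartsAdjacent G B2 B0)
    (hc4 : ∀ a b c d : V, IsInducedC4 G a b c d → ∀ B : Set V,
      (B = B0 ∨ B = B1 ∨ B = B2) → ∀ x ∈ ({a, b, c, d} : Set V),
      ∀ y ∈ ({a, b, c, d} : Set V), x ≠ y → x ∈ B → y ∉ B) :
    ∃ b0 b1 b2 : V, b0 ∈ B0 ∧ b1 ∈ B1 ∧ b2 ∈ B2 ∧
      G.Adj b0 b1 ∧ G.Adj b1 b2 ∧ G.Adj b2 b0 := by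
  set U : Set V := B0 ∪ B1 ∪ B2 with hU
  set H := Hgraph G U B0 B1 with hH
  have hsub0 : B0 ⊆ U := fun x hx => Or.inl (Or.inl hx)
  have hsub1 : B1 ⊆ U := fun x hx => Or.inl (Or.inr hx)
  have hsub2 : B2 ⊆ U := fun x hx => Or.inr hx
  have hedge0 : ∀ x y : V, x ∈ B0 → y ∈ B0 → G.Adj x y → H.Adj x y := by
    intro x y hx hy h
    refine ⟨h, hsub0 hx, hsub0 hy, ?_⟩
    rintro (⟨-, hy1⟩ | ⟨hx1, -⟩)
    · exact hd01.ne_of_mem hy hy1 rfl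
    · exact hd01.ne_of_mem hx hx1 rfl
  have hedge1 : ∀ x y : V, x ∈ B1 → y ∈ B1 → G.Adj x y → H.Adj x y := by
    intro x y hx hy h
    refine ⟨h, hsub1 hx, hsub1 hy, ?_⟩
    rintro (⟨hx0, -⟩ | ⟨-, hy0⟩)
    · exact hd01.ne_of_mem hx0 hx rfl
    · exact hd01.ne_of_mem hy0 hy rfl
  have hedge2 : ∀ x y : V, x ∈ B2 → y ∈ B2 → G.Adj x y → H.Adj x y := by
    intro x y hx hy h
    refine ⟨h, hsub2 hx, hsub2 hy, ?_⟩
    rintro (⟨hx0, -⟩ | ⟨-, hy0⟩)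
    · exact hd02.ne_of_mem hx0 hx rfl
    · exact hd02.ne_of_mem hy0 hy rfl
  have hedge02 : ∀ x y : V, x ∈ B0 → y ∈ B2 → G.Adj x y → H.Adj x y := by
    intro x y hx hy h
    refine ⟨h, hsub0 hx, hsub2 hy, ?_⟩
    rintro (⟨-, hy1⟩ | ⟨hx1, -⟩)
    · exact hd12.ne_of_mem hy1 hy rfl
    · exact hd01.ne_of_mem hx hx1 rfl
  have hedge12 : ∀ x y : V, x ∈ B1 → y ∈ B2 → G.Adj x y → H.Adj x y := by
    intro x y hx hy h
    refine ⟨h, hsub1 hx, hsub2 hy, ?_⟩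
    rintro (⟨hx0, -⟩ | ⟨-, hy0⟩)
    · exact hd01.ne_of_mem hx0 hx rfl
    · exact hd02.ne_of_mem hy0 hy rfl
  have hre : ∀ a b : V, a ∈ B0 → b ∈ B1 → G.Adj a b → H.Reachable a b := by
    intro a b ha hb _
    obtain ⟨c, hc, a0, ha0, hca0⟩ := h20
    obtain ⟨b1', hb1', c2, hc2, hb1c2⟩ := h12
    have r1 : H.Reachable a a0 := inpart_reach G U B0 B1 B0 hconn0 hedge0 ha ha0
    have r2 : H.Reachable a0 c := ((hedge02 a0 c ha0 hc hca0.symm)).reachable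
    have r3 : H.Reachable c c2 := inpart_reach G U B0 B1 B2 hconn2 hedge2 hc hc2
    have r4 : H.Reachable c2 b1' := ((hedge12 b1' c2 hb1' hc2 hb1c2).reachable).symm
    have r5 : H.Reachable b1' b := inpart_reach G U B0 B1 B1 hconn1 hedge1 hb1' hb
    exact (((r1.trans r2).trans r3).trans r4).trans r5
  obtain ⟨m, p, hm2, hp0, hpm, hadj0m, hHadj, hUmem, hinj, hchar⟩ :=
    pathlemma G U B0 B1 hre h01
  have hm3 : m ≤ 3 := by
    by_contra h
    exact no_long_hole hG m (by omega) p hinj hchar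
  have hcase : ∀ i, i ≤ m → p i ∈ B0 ∨ p i ∈ B1 ∨ p i ∈ B2 := by
    intro i hi
    rcases hUmem i hi with (h | h) | h
    · exact Or.inl h
    · exact Or.inr (Or.inl h)
    · exact Or.inr (Or.inr h)
  interval_cases m
  · rcases hcase 1 (by omega) with h | h | h
    · exact absurd (Or.inl ⟨h, hpm⟩) (hHadj 1 (by omega)).2.2.2
    · exact absurd (Or.inl ⟨hp0, h⟩) (hHadj 0 (by omega)).2.2.2
    · exact ⟨p 0, p 2, p 1, hp0, hpm, h, hadj0m, ((hHadj 1 (by omega)).1).symm,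
        ((hHadj 0 (by omega)).1).symm⟩
  · exfalso
    have hC4 : IsInducedC4 G (p 0) (p 1) (p 2) (p 3) := by
      refine ⟨fun h => by have := hinj 0 1 (by omega) (by omega) h; omega,
        fun h => by have := hinj 0 2 (by omega) (by omega) h; omega,
        fun h => by have := hinj 0 3 (by omega) (by omega) h; omega,
        fun h => by have := hinj 1 2 (by omega) (by omega) h; omega,
        fun h => by have := hinj 1 3 (by omega) (by omega) h; omega,
        fun h => by have := hinj 2 3 (by omega) (by omega) h; omega,
        (hHadj 0 (by omega)).1, (hHadj 1 (by omega)).1, (hHadj 2 (by omega)).1,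
        hadj0m.symm, ?_, ?_⟩
      · intro h
        rcases (hchar 0 2 (by omega) (by omega)).mp h with h' | h' <;> omega
      · intro h
        rcases (hchar 1 3 (by omega) (by omega)).mp h with h' | h' <;> omega
    have hmem4 : ∀ v : V, v ∈ ({p 0, p 1, p 2, p 3} : Set V) ↔
        (v = p 0 ∨ v = p 1 ∨ v = p 2 ∨ v = p 3) := by intro v; simp
    have hpair : ∀ (i j : ℕ), i ≤ 3 → j ≤ 3 → i ≠ j → ∀ B : Set V,
        (B = B0 ∨ B = B1 ∨ B = B2) → p i ∈ B → p j ∈ B → False := by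
      intro i j hi hj hij B hB hpi hpj
      have hx : p i ∈ ({p 0, p 1, p 2, p 3} : Set V) := by
        rw [hmem4]; interval_cases i <;> tauto
      have hy : p j ∈ ({p 0, p 1, p 2, p 3} : Set V) := by
        rw [hmem4]; interval_cases j <;> tauto
      exact hc4 (p 0) (p 1) (p 2) (p 3) hC4 B hB (p i) hx (p j) hy
        (fun h => hij (hinj i j (by omega) (by omega) h)) hpi hpj
    rcases hcase 1 (by omega) with h1 | h1 | h1
    · exact hpair 0 1 (by omega) (by omega) (by omega) B0 (by tauto) hp0 h1
    · exact absurd (Or.inl ⟨hp0, h1⟩) (hHadj 0 (by omega)).2.2.2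
    · rcases hcase 2 (by omega) with h2 | h2 | h2
      · exact hpair 0 2 (by omega) (by omega) (by omega) B0 (by tauto) hp0 h2
      · exact hpair 2 3 (by omega) (by omega) (by omega) B1 (by tauto) h2 hpm
      · exact hpair 1 2 (by omega) (by omega) (by omega) B2 (by tauto) h1 h2

private lemma square_lemma (G : SimpleGraph V) (hG : IsCocomparability G)
    (B0 B1 B2 B3 : Set V)
    (hconn0 : (SimpleGraph.induce B0 G).Connected)
    (hconn1 : (SimpleGraph.induce B1 G).Connected)
    (hconn2 : (SimpleGraph.induce B2 G).Connected)
    (hconn3 : (SimpleGraph.induce B3 G).Connected)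
    (hd01 : Disjoint B0 B1) (hd02 : Disjoint B0 B2)
    (hd12 : Disjoint B1 B2) (hd13 : Disjoint B1 B3)
    (h01 : PartsAdjacent G B0 B1) (h12 : PartsAdjacent G B1 B2)
    (h23 : PartsAdjacent G B2 B3) (h30 : PartsAdjacent G B3 B0)
    (hn02 : ¬ PartsAdjacent G B0 B2) (hn13 : ¬ PartsAdjacent G B1 B3) :
    ∃ b0 b1 b2 b3 : V, b0 ∈ B0 ∧ b1 ∈ B1 ∧ b2 ∈ B2 ∧ b3 ∈ B3 ∧
      G.Adj b0 b1 ∧ G.Adj b1 b2 ∧ G.Adj b2 b3 ∧ G.Adj b3 b0 ∧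
      ¬ G.Adj b0 b2 ∧ ¬ G.Adj b1 b3 := by
  set U : Set V := B0 ∪ B1 ∪ B2 ∪ B3 with hU
  set H := Hgraph G U B0 B1 with hH
  have hsub0 : B0 ⊆ U := fun x hx => Or.inl (Or.inl (Or.inl hx))
  have hsub1 : B1 ⊆ U := fun x hx => Or.inl (Or.inl (Or.inr hx))
  have hsub2 : B2 ⊆ U := fun x hx => Or.inl (Or.inr hx)
  have hsub3 : B3 ⊆ U := fun x hx => Or.inr hx
  have hno02 : ∀ x y : V, x ∈ B0 → y ∈ B2 → ¬ G.Adj x y :=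
    fun x y hx hy h => hn02 ⟨x, hx, y, hy, h⟩
  have hno13 : ∀ x y : V, x ∈ B1 → y ∈ B3 → ¬ G.Adj x y :=
    fun x y hx hy h => hn13 ⟨x, hx, y, hy, h⟩
  have hedgeGen : ∀ x y : V, x ∈ U → y ∈ U → x ∉ B1 → y ∉ B1 → G.Adj x y → H.Adj x y := by
    intro x y hx hy hx1 hy1 h
    exact ⟨h, hx, hy, by tauto⟩
  have hedgeGen' : ∀ x y : V, x ∈ U → y ∈ U → x ∉ B0 → y ∉ B0 → G.Adj x y → H.Adj x y := by
    intro x y hx hy hx0 hy0 h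
    exact ⟨h, hx, hy, by tauto⟩
  have hedge0 : ∀ x y : V, x ∈ B0 → y ∈ B0 → G.Adj x y → H.Adj x y :=
    fun x y hx hy h => hedgeGen x y (hsub0 hx) (hsub0 hy)
      (fun h1 => hd01.ne_of_mem hx h1 rfl) (fun h1 => hd01.ne_of_mem hy h1 rfl) h
  have hedge1 : ∀ x y : V, x ∈ B1 → y ∈ B1 → G.Adj x y → H.Adj x y :=
    fun x y hx hy h => hedgeGen' x y (hsub1 hx) (hsub1 hy)
      (fun h1 => hd01.ne_of_mem h1 hx rfl) (fun h1 => hd01.ne_of_mem h1 hy rfl) h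
  have hedge2 : ∀ x y : V, x ∈ B2 → y ∈ B2 → G.Adj x y → H.Adj x y :=
    fun x y hx hy h => hedgeGen x y (hsub2 hx) (hsub2 hy)
      (fun h1 => hd12.ne_of_mem h1 hx rfl) (fun h1 => hd12.ne_of_mem h1 hy rfl) h
  have hedge3 : ∀ x y : V, x ∈ B3 → y ∈ B3 → G.Adj x y → H.Adj x y :=
    fun x y hx hy h => hedgeGen x y (hsub3 hx) (hsub3 hy)
      (fun h1 => hd13.ne_of_mem h1 hx rfl) (fun h1 => hd13.ne_of_mem h1 hy rfl) h
  have hedge03 : ∀ x y : V, x ∈ B0 → y ∈ B3 → G.Adj x y → H.Adj x y :=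
    fun x y hx hy h => hedgeGen x y (hsub0 hx) (hsub3 hy)
      (fun h1 => hd01.ne_of_mem hx h1 rfl) (fun h1 => hd13.ne_of_mem h1 hy rfl) h
  have hedge23 : ∀ x y : V, x ∈ B2 → y ∈ B3 → G.Adj x y → H.Adj x y :=
    fun x y hx hy h => hedgeGen x y (hsub2 hx) (hsub3 hy)
      (fun h1 => hd12.ne_of_mem h1 hx rfl) (fun h1 => hd13.ne_of_mem h1 hy rfl) h
  have hedge12 : ∀ x y : V, x ∈ B1 → y ∈ B2 → G.Adj x y → H.Adj x y :=
    fun x y hx hy h => hedgeGen' x y (hsub1 hx) (hsub2 hy)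
      (fun h1 => hd01.ne_of_mem h1 hx rfl) (fun h1 => hd02.ne_of_mem h1 hy rfl) h
  have hre : ∀ a b : V, a ∈ B0 → b ∈ B1 → G.Adj a b → H.Reachable a b := by
    intro a b ha hb _
    obtain ⟨w3, hw3, a0, ha0, hw3a0⟩ := h30
    obtain ⟨z2, hz2, w3', hw3', hz2w3'⟩ := h23
    obtain ⟨b1', hb1', z2', hz2', hb1z2'⟩ := h12
    have r1 : H.Reachable a a0 := inpart_reach G U B0 B1 B0 hconn0 hedge0 ha ha0
    have r2 : H.Reachable a0 w3 := ((hedge03 a0 w3 ha0 hw3 hw3a0.symm)).reachable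
    have r3 : H.Reachable w3 w3' := inpart_reach G U B0 B1 B3 hconn3 hedge3 hw3 hw3'
    have r4 : H.Reachable w3' z2 := ((hedge23 z2 w3' hz2 hw3' hz2w3').reachable).symm
    have r5 : H.Reachable z2 z2' := inpart_reach G U B0 B1 B2 hconn2 hedge2 hz2 hz2'
    have r6 : H.Reachable z2' b1' := ((hedge12 b1' z2' hb1' hz2' hb1z2').reachable).symm
    have r7 : H.Reachable b1' b := inpart_reach G U B0 B1 B1 hconn1 hedge1 hb1' hb
    exact ((((((r1.trans r2).trans r3).trans r4).trans r5).trans r6).trans r7)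
  obtain ⟨m, p, hm2, hp0, hpm, hadj0m, hHadj, hUmem, hinj, hchar⟩ :=
    pathlemma G U B0 B1 hre h01
  have hm3 : m ≤ 3 := by
    by_contra h
    exact no_long_hole hG m (by omega) p hinj hchar
  have hcase : ∀ i, i ≤ m → p i ∈ B0 ∨ p i ∈ B1 ∨ p i ∈ B2 ∨ p i ∈ B3 := by
    intro i hi
    rcases hUmem i hi with ((h | h) | h) | h
    · exact Or.inl h
    · exact Or.inr (Or.inl h)
    · exact Or.inr (Or.inr (Or.inl h))
    · exact Or.inr (Or.inr (Or.inr h))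
  interval_cases m
  · exfalso
    rcases hcase 1 (by omega) with h | h | h | h
    · exact (hHadj 1 (by omega)).2.2.2 (Or.inl ⟨h, hpm⟩)
    · exact (hHadj 0 (by omega)).2.2.2 (Or.inl ⟨hp0, h⟩)
    · exact hno02 (p 0) (p 1) hp0 h (hHadj 0 (by omega)).1
    · exact hno13 (p 2) (p 1) hpm h ((hHadj 1 (by omega)).1).symm
  · have hp1 : p 1 ∈ B3 := by
      rcases hcase 1 (by omega) with h1 | h1 | h1 | h1
      · exfalso
        rcases hcase 2 (by omega) with h2 | h2 | h2 | h2
        · exact (hHadj 2 (by omega)).2.2.2 (Or.inl ⟨h2, hpm⟩)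
        · exact (hHadj 1 (by omega)).2.2.2 (Or.inl ⟨h1, h2⟩)
        · exact hno02 (p 1) (p 2) h1 h2 (hHadj 1 (by omega)).1
        · exact hno13 (p 3) (p 2) hpm h2 ((hHadj 2 (by omega)).1).symm
      · exact absurd (Or.inl ⟨hp0, h1⟩) (hHadj 0 (by omega)).2.2.2
      · exact absurd ((hHadj 0 (by omega)).1) (hno02 (p 0) (p 1) hp0 h1)
      · exact h1
    have hp2 : p 2 ∈ B2 := by
      rcases hcase 2 (by omega) with h2 | h2 | h2 | h2
      · exact absurd (Or.inl ⟨h2, hpm⟩) (hHadj 2 (by omega)).2.2.2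
      · exact absurd ((hHadj 1 (by omega)).1) (fun h => hno13 (p 2) (p 1) h2 hp1 h.symm)
      · exact h2
      · exact absurd ((hHadj 2 (by omega)).1) (fun h => hno13 (p 3) (p 2) hpm h2 h.symm)
    exact ⟨p 0, p 3, p 2, p 1, hp0, hpm, hp2, hp1, hadj0m,
      ((hHadj 2 (by omega)).1).symm, ((hHadj 1 (by omega)).1).symm,
      ((hHadj 0 (by omega)).1).symm,
      hno02 (p 0) (p 2) hp0 hp2, hno13 (p 3) (p 1) hpm hp1⟩

end BranchCycleAux

theorem branch_cycle_lifts {V : Type*} [Fintype V]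
    (G : SimpleGraph V) (hG : IsCocomparability G)
    (P : Set (Set V)) (hP : IsBranchPartition G P)
    (k : ℕ) (hk : k = 3 ∨ k = 4) (B : ZMod k → Set V)
    (hmem : ∀ i : ZMod k, B i ∈ P)
    (hinj : Function.Injective B)
    (hadj : ∀ i : ZMod k, PartsAdjacent G (B i) (B (i + 1)))
    (hnonadj : k = 4 → ¬ PartsAdjacent G (B 0) (B 2) ∧
      ¬ PartsAdjacent G (B 1) (B 3)) :
    (∀ i : ZMod k, (Bset G (B i) (B (i - 1)) ∩ Bset G (B i) (B (i + 1))).Nonempty) ∧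
    ∃ b : ZMod k → V, (∀ i : ZMod k, b i ∈ B i) ∧ Function.Injective b ∧
      (∀ i : ZMod k, G.Adj (b i) (b (i + 1))) ∧
      (∀ i j : ZMod k, i ≠ j → j ≠ i + 1 → i ≠ j + 1 → ¬ G.Adj (b i) (b j)) := by
  obtain ⟨-, hdisjP, -, hconnP, -, hc4P⟩ := hP
  rcases hk with rfl | rfl
  · -- k = 3
    have hBne : ∀ i j : ZMod 3, i ≠ j → B i ≠ B j := fun i j hij h => hij (hinj h)
    have hd01 : Disjoint (B 0) (B 1) := hdisjP _ (hmem 0) _ (hmem 1) (hBne 0 1 (by decide))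
    have hd02 : Disjoint (B 0) (B 2) := hdisjP _ (hmem 0) _ (hmem 2) (hBne 0 2 (by decide))
    have hd12 : Disjoint (B 1) (B 2) := hdisjP _ (hmem 1) _ (hmem 2) (hBne 1 2 (by decide))
    have h01 : PartsAdjacent G (B 0) (B 1) := by
      have := hadj 0; rwa [show (0:ZMod 3) + 1 = 1 from by decide] at this
    have h12 : PartsAdjacent G (B 1) (B 2) := by
      have := hadj 1; rwa [show (1:ZMod 3) + 1 = 2 from by decide] at this
    have h20 : PartsAdjacent G (B 2) (B 0) := by
      have := hadj 2; rwa [show (2:ZMod 3) + 1 = 0 from by decide] at this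
    have hc4 : ∀ a b c d : V, IsInducedC4 G a b c d → ∀ Bx : Set V,
        (Bx = B 0 ∨ Bx = B 1 ∨ Bx = B 2) → ∀ x ∈ ({a, b, c, d} : Set V),
        ∀ y ∈ ({a, b, c, d} : Set V), x ≠ y → x ∈ Bx → y ∉ Bx := by
      intro a b c d h4 Bx hBx
      have hBxP : Bx ∈ P := by rcases hBx with rfl | rfl | rfl <;> exact hmem _
      exact hc4P a b c d h4 Bx hBxP
    obtain ⟨b0, b1, b2, hb0, hb1, hb2, ha01, ha12, ha20⟩ :=
      triangle_lemma G hG (B 0) (B 1) (B 2) (hconnP _ (hmem 0)) (hconnP _ (hmem 1))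
        (hconnP _ (hmem 2)) hd01 hd02 hd12 h01 h12 h20 hc4
    have hZ3 : ∀ i : ZMod 3, i = 0 ∨ i = 1 ∨ i = 2 := by decide
    set bb : ZMod 3 → V := fun i => if i = 0 then b0 else if i = 1 then b1 else b2 with hbb
    have e0 : bb 0 = b0 := if_pos rfl
    have e1 : bb 1 = b1 := by
      show (if (1:ZMod 3) = 0 then b0 else if (1:ZMod 3) = 1 then b1 else b2) = b1
      rw [if_neg (by decide), if_pos rfl]
    have e2 : bb 2 = b2 := by
      show (if (2:ZMod 3) = 0 then b0 else if (2:ZMod 3) = 1 then b1 else b2) = b2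
      rw [if_neg (by decide), if_neg (by decide)]
    constructor
    · intro i
      rcases hZ3 i with rfl | rfl | rfl
      · rw [show (0:ZMod 3) - 1 = 2 from by decide, show (0:ZMod 3) + 1 = 1 from by decide]
        exact ⟨b0, ⟨hb0, b2, hb2, ha20.symm⟩, ⟨hb0, b1, hb1, ha01⟩⟩
      · rw [show (1:ZMod 3) - 1 = 0 from by decide, show (1:ZMod 3) + 1 = 2 from by decide]
        exact ⟨b1, ⟨hb1, b0, hb0, ha01.symm⟩, ⟨hb1, b2, hb2, ha12⟩⟩
      · rw [show (2:ZMod 3) - 1 = 1 from by decide, show (2:ZMod 3) + 1 = 0 from by decide]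
        exact ⟨b2, ⟨hb2, b1, hb1, ha12.symm⟩, ⟨hb2, b0, hb0, ha20⟩⟩
    · refine ⟨bb, ?_, ?_, ?_, ?_⟩
      · intro i
        rcases hZ3 i with rfl | rfl | rfl
        · rw [e0]; exact hb0
        · rw [e1]; exact hb1
        · rw [e2]; exact hb2
      · intro i j h
        rcases hZ3 i with rfl | rfl | rfl <;> rcases hZ3 j with rfl | rfl | rfl <;>
          simp only [e0, e1, e2] at h <;>
          first
            | rfl
            | exact absurd h ha01.ne
            | exact absurd h ha01.ne'
            | exact absurd h ha12.ne
            | exact absurd h ha12.ne'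
            | exact absurd h ha20.ne
            | exact absurd h ha20.ne'
      · intro i
        rcases hZ3 i with rfl | rfl | rfl
        · rw [show (0:ZMod 3) + 1 = 1 from by decide, e0, e1]; exact ha01
        · rw [show (1:ZMod 3) + 1 = 2 from by decide, e1, e2]; exact ha12
        · rw [show (2:ZMod 3) + 1 = 0 from by decide, e2, e0]; exact ha20
      · intro i j h1 h2 h3
        exfalso
        have htot : ∀ i j : ZMod 3, i = j ∨ j = i + 1 ∨ i = j + 1 := by decide
        rcases htot i j with h | h | h
        · exact h1 h
        · exact h2 h
        · exact h3 h
  · -- k = 4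
    obtain ⟨hn02, hn13⟩ := hnonadj rfl
    have hBne : ∀ i j : ZMod 4, i ≠ j → B i ≠ B j := fun i j hij h => hij (hinj h)
    have hd01 : Disjoint (B 0) (B 1) := hdisjP _ (hmem 0) _ (hmem 1) (hBne 0 1 (by decide))
    have hd02 : Disjoint (B 0) (B 2) := hdisjP _ (hmem 0) _ (hmem 2) (hBne 0 2 (by decide))
    have hd12 : Disjoint (B 1) (B 2) := hdisjP _ (hmem 1) _ (hmem 2) (hBne 1 2 (by decide))
    have hd13 : Disjoint (B 1) (B 3) := hdisjP _ (hmem 1) _ (hmem 3) (hBne 1 3 (by decide))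
    have h01 : PartsAdjacent G (B 0) (B 1) := by
      have := hadj 0; rwa [show (0:ZMod 4) + 1 = 1 from by decide] at this
    have h12 : PartsAdjacent G (B 1) (B 2) := by
      have := hadj 1; rwa [show (1:ZMod 4) + 1 = 2 from by decide] at this
    have h23 : PartsAdjacent G (B 2) (B 3) := by
      have := hadj 2; rwa [show (2:ZMod 4) + 1 = 3 from by decide] at this
    have h30 : PartsAdjacent G (B 3) (B 0) := by
      have := hadj 3; rwa [show (3:ZMod 4) + 1 = 0 from by decide] at this
    obtain ⟨b0, b1, b2, b3, hb0, hb1, hb2, hb3, ha01, ha12, ha23, ha30, hn02b, hn13b⟩ :=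
      square_lemma G hG (B 0) (B 1) (B 2) (B 3) (hconnP _ (hmem 0)) (hconnP _ (hmem 1))
        (hconnP _ (hmem 2)) (hconnP _ (hmem 3)) hd01 hd02 hd12 hd13
        h01 h12 h23 h30 hn02 hn13
    have hZ4 : ∀ i : ZMod 4, i = 0 ∨ i = 1 ∨ i = 2 ∨ i = 3 := by decide
    set bb : ZMod 4 → V :=
      fun i => if i = 0 then b0 else if i = 1 then b1 else if i = 2 then b2 else b3 with hbb
    have e0 : bb 0 = b0 := if_pos rfl
    have e1 : bb 1 = b1 := by
      show (if (1:ZMod 4) = 0 then b0 else if (1:ZMod 4) = 1 then b1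
        else if (1:ZMod 4) = 2 then b2 else b3) = b1
      rw [if_neg (by decide), if_pos rfl]
    have e2 : bb 2 = b2 := by
      show (if (2:ZMod 4) = 0 then b0 else if (2:ZMod 4) = 1 then b1
        else if (2:ZMod 4) = 2 then b2 else b3) = b2
      rw [if_neg (by decide), if_neg (by decide), if_pos rfl]
    have e3 : bb 3 = b3 := by
      show (if (3:ZMod 4) = 0 then b0 else if (3:ZMod 4) = 1 then b1
        else if (3:ZMod 4) = 2 then b2 else b3) = b3
      rw [if_neg (by decide), if_neg (by decide), if_neg (by decide)]
    have n02 : b0 ≠ b2 := hd02.ne_of_mem hb0 hb2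
    have n13 : b1 ≠ b3 := hd13.ne_of_mem hb1 hb3
    constructor
    · intro i
      rcases hZ4 i with rfl | rfl | rfl | rfl
      · rw [show (0:ZMod 4) - 1 = 3 from by decide, show (0:ZMod 4) + 1 = 1 from by decide]
        exact ⟨b0, ⟨hb0, b3, hb3, ha30.symm⟩, ⟨hb0, b1, hb1, ha01⟩⟩
      · rw [show (1:ZMod 4) - 1 = 0 from by decide, show (1:ZMod 4) + 1 = 2 from by decide]
        exact ⟨b1, ⟨hb1, b0, hb0, ha01.symm⟩, ⟨hb1, b2, hb2, ha12⟩⟩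
      · rw [show (2:ZMod 4) - 1 = 1 from by decide, show (2:ZMod 4) + 1 = 3 from by decide]
        exact ⟨b2, ⟨hb2, b1, hb1, ha12.symm⟩, ⟨hb2, b3, hb3, ha23⟩⟩
      · rw [show (3:ZMod 4) - 1 = 2 from by decide, show (3:ZMod 4) + 1 = 0 from by decide]
        exact ⟨b3, ⟨hb3, b2, hb2, ha23.symm⟩, ⟨hb3, b0, hb0, ha30⟩⟩
    · refine ⟨bb, ?_, ?_, ?_, ?_⟩
      · intro i
        rcases hZ4 i with rfl | rfl | rfl | rfl
        · rw [e0]; exact hb0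
        · rw [e1]; exact hb1
        · rw [e2]; exact hb2
        · rw [e3]; exact hb3
      · intro i j h
        rcases hZ4 i with rfl | rfl | rfl | rfl <;> rcases hZ4 j with rfl | rfl | rfl | rfl <;>
          simp only [e0, e1, e2, e3] at h <;>
          first
            | rfl
            | exact absurd h ha01.ne
            | exact absurd h ha01.ne'
            | exact absurd h ha12.ne
            | exact absurd h ha12.ne'
            | exact absurd h ha23.ne
            | exact absurd h ha23.ne'
            | exact absurd h ha30.ne
            | exact absurd h ha30.ne'
            | exact absurd h n02
            | exact absurd h n02.symm
            | exact absurd h n13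
            | exact absurd h n13.symm
      · intro i
        rcases hZ4 i with rfl | rfl | rfl | rfl
        · rw [show (0:ZMod 4) + 1 = 1 from by decide, e0, e1]; exact ha01
        · rw [show (1:ZMod 4) + 1 = 2 from by decide, e1, e2]; exact ha12
        · rw [show (2:ZMod 4) + 1 = 3 from by decide, e2, e3]; exact ha23
        · rw [show (3:ZMod 4) + 1 = 0 from by decide, e3, e0]; exact ha30
      · intro i j h1 h2 h3
        rcases hZ4 i with rfl | rfl | rfl | rfl <;> rcases hZ4 j with rfl | rfl | rfl | rfl <;>
          first
            | exact absurd rfl h1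
            | exact absurd (by decide) h2
            | exact absurd (by decide) h3
            | (rw [e0, e2]; exact hn02b)
            | (rw [e1, e3]; exact hn13b)
            | (rw [e2, e0]; exact fun hh => hn02b hh.symm)
            | (rw [e3, e1]; exact fun hh => hn13b hh.symm)
end
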